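/- arXiv:2512.02745 — 3 statements merged into one kernel-verified Lean document; each statement's English description precedes it below -/
import Mathlib

section
/- For any p > 1 and any L > 0, if f ∈ L¹(ℝ) ∩ L²(ℝ) and ∫_ℝ |x|^p |f(x)|² dx < ∞, then the COS tail energy B(L) := Σ_{k=0}^∞ (1/L) |∫_{ℝ\[-L,L]} f(x) cos(kπ(x+L)/(2L)) dx|² satisfies B(L) ≤ 2 ζ(p) ( L^{-p} ∫_{|x|>L} |x|^p |f(x)|² dx + ∫_{|x|>L} |f(x)|² dx ). -/
open MeasureTheory Real

private lemma cosInt (L : ℝ) (hL : 0 < L) (j q : ℤ) (a : ℝ) (ha : a + L = 2 * L * q) :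
    ∫ x in a..(a + 2 * L), Real.cos ((j : ℝ) * π * (x + L) / (2 * L)) =
      if j = 0 then 2 * L else 0 := by
  rcases eq_or_ne j 0 with rfl | hj
  · simp only [Int.cast_zero, zero_mul, zero_div, Real.cos_zero, if_pos rfl]
    rw [intervalIntegral.integral_const]
    norm_num
  · rw [if_neg hj]
    have h2L : (2 * L) ≠ 0 := by positivity
    set c := (j : ℝ) * π / (2 * L) with hc
    have hcne : c ≠ 0 :=
      div_ne_zero (mul_ne_zero (Int.cast_ne_zero.2 hj) Real.pi_ne_zero) h2L
    have hfun : ∀ x : ℝ, (j : ℝ) * π * (x + L) / (2 * L) = c * x + c * L := by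
      intro x; rw [hc]; field_simp
    have key := intervalIntegral.mul_integral_comp_mul_add (a := a) (b := a + 2 * L)
      (f := Real.cos) (c := c) (d := c * L)
    rw [integral_cos] at key
    have haq : a = 2 * L * q - L := by linarith
    have e1 : c * a + c * L = ((j * q : ℤ) : ℝ) * π := by
      rw [haq, hc]; push_cast; field_simp; ring
    have e2 : c * (a + 2 * L) + c * L = ((j * q + j : ℤ) : ℝ) * π := by
      rw [haq, hc]; push_cast; field_simp; ring
    rw [e1, e2, Real.sin_int_mul_pi, Real.sin_int_mul_pi, sub_zero] at key
    simp only [hfun]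
    rcases mul_eq_zero.1 key with h | h
    · exact absurd h hcne
    · exact h

private lemma cosOrth (L : ℝ) (hL : 0 < L) (q : ℤ) (a : ℝ) (ha : a + L = 2 * L * q) (k m : ℕ) :
    ∫ x in a..(a + 2 * L),
        Real.cos ((k : ℝ) * π * (x + L) / (2 * L)) * Real.cos ((m : ℝ) * π * (x + L) / (2 * L)) =
      if k = m then (if k = 0 then 2 * L else L) else 0 := by
  have hptw : ∀ x : ℝ,
      Real.cos ((k : ℝ) * π * (x + L) / (2 * L)) * Real.cos ((m : ℝ) * π * (x + L) / (2 * L)) =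
        (Real.cos ((((k : ℤ) - (m : ℤ) : ℤ) : ℝ) * π * (x + L) / (2 * L)) +
          Real.cos ((((k : ℤ) + (m : ℤ) : ℤ) : ℝ) * π * (x + L) / (2 * L))) / 2 := by
    intro x
    have hA : (((k : ℤ) - (m : ℤ) : ℤ) : ℝ) * π * (x + L) / (2 * L) =
        (k : ℝ) * π * (x + L) / (2 * L) - (m : ℝ) * π * (x + L) / (2 * L) := by
      push_cast; ring
    have hB : (((k : ℤ) + (m : ℤ) : ℤ) : ℝ) * π * (x + L) / (2 * L) =
        (k : ℝ) * π * (x + L) / (2 * L) + (m : ℝ) * π * (x + L) / (2 * L) := by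
      push_cast; ring
    rw [hA, hB, Real.cos_sub, Real.cos_add]; ring
  simp only [hptw]
  have hi : ∀ j : ℤ, IntervalIntegrable
      (fun x : ℝ => Real.cos ((j : ℝ) * π * (x + L) / (2 * L))) volume a (a + 2 * L) := by
    intro j
    exact (Real.continuous_cos.comp (by continuity)).intervalIntegrable _ _
  rw [intervalIntegral.integral_div, intervalIntegral.integral_add (hi _) (hi _),
    cosInt L hL _ q a ha, cosInt L hL _ q a ha]
  have e1 : ((k : ℤ) - (m : ℤ) = 0) ↔ k = m := by omega
  have e2 : ((k : ℤ) + (m : ℤ) = 0) ↔ (k = 0 ∧ m = 0) := by omega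
  simp only [e1, e2]
  by_cases hkm : k = m
  · subst hkm
    by_cases hk : k = 0
    · subst hk
      norm_num
    · have hand : ¬(k = 0 ∧ k = 0) := fun h => hk h.1
      simp only [if_pos rfl, if_neg hk, if_neg hand]
      norm_num
  · have h2 : ¬(k = 0 ∧ m = 0) := fun h => hkm (h.1.trans h.2.symm)
    simp only [if_neg hkm, if_neg h2]
    norm_num

private lemma bessel (L : ℝ) (hL : 0 < L) (q : ℤ) (a : ℝ) (ha : a + L = 2 * L * q)
    (f : ℝ → ℝ) (hfi : IntegrableOn f (Set.Ioc a (a + 2 * L)))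
    (hfsq : IntegrableOn (fun x => f x ^ 2) (Set.Ioc a (a + 2 * L))) (F : Finset ℕ) :
    ∑ k ∈ F,
        (∫ x in Set.Ioc a (a + 2 * L), f x * Real.cos ((k : ℝ) * π * (x + L) / (2 * L))) ^ 2 ≤
      2 * L * ∫ x in Set.Ioc a (a + 2 * L), f x ^ 2 := by
  classical
  set I : Set ℝ := Set.Ioc a (a + 2 * L) with hI
  set c : ℕ → ℝ → ℝ := fun k x => Real.cos ((k : ℝ) * π * (x + L) / (2 * L)) with hcdef
  have hccont : ∀ k, Continuous (c k) := fun k =>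
    Real.continuous_cos.comp (by continuity)
  set A : ℕ → ℝ := fun k => ∫ x in I, f x * c k x with hAdef
  set ν : ℕ → ℝ := fun k => if k = 0 then 2 * L else L with hνdef
  have hν0 : ∀ k, 0 < ν k := by
    intro k
    show (0 : ℝ) < if k = 0 then 2 * L else L
    split_ifs <;> linarith
  have hνle : ∀ k, ν k ≤ 2 * L := by
    intro k
    show (if k = 0 then 2 * L else L) ≤ 2 * L
    split_ifs <;> linarith
  set r : ℕ → ℝ := fun k => A k / ν k with hrdef
  have hab : a ≤ a + 2 * L := by linarith
  have horth : ∀ k m : ℕ, ∫ x in I, c k x * c m x = if k = m then ν k else 0 := by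
    intro k m
    have h1 : ∫ x in I, c k x * c m x = ∫ x in a..(a + 2 * L),
        Real.cos ((k : ℝ) * π * (x + L) / (2 * L)) * Real.cos ((m : ℝ) * π * (x + L) / (2 * L)) :=
      (intervalIntegral.integral_of_le hab).symm
    rw [h1, cosOrth L hL q a ha k m]
  have hfc : ∀ k, IntegrableOn (fun x => f x * c k x) I := by
    intro k
    have hb : ∃ C, ∀ x : ℝ, ‖c k x‖ ≤ C :=
      ⟨1, fun x => by simpa [Real.norm_eq_abs, hcdef] using Real.abs_cos_le_one _⟩
    have := Integrable.bdd_mul hfi ((hccont k).aestronglyMeasurable) (Filter.Eventually.of_forall hb.choose_spec)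
    exact (by simpa [mul_comm] using this : Integrable (fun x => f x * c k x) (volume.restrict I))
  have hcc : ∀ k m, IntegrableOn (fun x => c k x * c m x) I := fun k m =>
    ((hccont k).mul (hccont m)).integrableOn_Ioc
  set h : ℝ → ℝ := fun x => ∑ k ∈ F, r k * c k x with hhdef
  have hfh_eq : (fun x => f x * h x) = fun x => ∑ k ∈ F, r k * (f x * c k x) := by
    funext x
    show f x * ∑ k ∈ F, r k * c k x = _
    rw [Finset.mul_sum]
    exact Finset.sum_congr rfl fun k _ => by ring
  have hfh : IntegrableOn (fun x => f x * h x) I := by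
    rw [hfh_eq]
    exact integrable_finset_sum _ fun k _ => ((hfc k).const_mul (r k))
  have hhcont : Continuous h := continuous_finset_sum _ fun k _ => continuous_const.mul (hccont k)
  have hh2 : IntegrableOn (fun x => h x ^ 2) I := (hhcont.pow 2).integrableOn_Ioc
  have hFh : ∫ x in I, f x * h x = ∑ k ∈ F, A k ^ 2 / ν k := by
    rw [hfh_eq, integral_finset_sum _ fun k _ => ((hfc k).const_mul (r k))]
    refine Finset.sum_congr rfl fun k _ => ?_
    rw [integral_const_mul]
    show r k * A k = A k ^ 2 / ν k
    rw [hrdef]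
    ring
  have hhh : ∫ x in I, h x ^ 2 = ∑ k ∈ F, A k ^ 2 / ν k := by
    have hexp : (fun x => h x ^ 2) = fun x => ∑ k ∈ F, ∑ l ∈ F, (r k * r l) * (c k x * c l x) := by
      funext x
      show (∑ k ∈ F, r k * c k x) ^ 2 = _
      rw [sq, Finset.sum_mul_sum]
      exact Finset.sum_congr rfl fun k _ => Finset.sum_congr rfl fun l _ => by ring
    rw [hexp, integral_finset_sum _ fun k _ =>
      integrable_finset_sum _ fun l _ => ((hcc k l).const_mul (r k * r l))]
    refine Finset.sum_congr rfl fun k hk => ?_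
    rw [integral_finset_sum _ fun l _ => ((hcc k l).const_mul (r k * r l))]
    have hterm : ∀ l ∈ F, (∫ x in I, (r k * r l) * (c k x * c l x)) =
        if k = l then r k * r l * ν k else 0 := by
      intro l _
      rw [integral_const_mul, horth k l]
      by_cases hkl : k = l <;> simp [hkl]
    rw [Finset.sum_congr rfl hterm, Finset.sum_ite_eq F k (fun l => r k * r l * ν k), if_pos hk]
    show r k * r k * ν k = A k ^ 2 / ν k
    rw [hrdef]
    field_simp
  have hnn : 0 ≤ ∫ x in I, (f x - h x) ^ 2 := integral_nonneg fun x => sq_nonneg _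
  have hexpand : ∫ x in I, (f x - h x) ^ 2 =
      (∫ x in I, f x ^ 2) - 2 * (∫ x in I, f x * h x) + ∫ x in I, h x ^ 2 := by
    have heq : (fun x => (f x - h x) ^ 2) =
        fun x => (f x ^ 2 - 2 * (f x * h x)) + h x ^ 2 := funext fun x => by ring
    have h2int : Integrable (fun x => 2 * (f x * h x)) (volume.restrict I) := hfh.const_mul 2
    have hsubint : Integrable (fun x => f x ^ 2 - 2 * (f x * h x)) (volume.restrict I) :=
      hfsq.sub h2int
    rw [heq, integral_add hsubint hh2, integral_sub hfsq h2int, integral_const_mul]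
  have hSle : ∑ k ∈ F, A k ^ 2 / ν k ≤ ∫ x in I, f x ^ 2 := by
    rw [hexpand, hFh, hhh] at hnn
    linarith
  have hterm2 : ∀ k ∈ F, A k ^ 2 ≤ 2 * L * (A k ^ 2 / ν k) := by
    intro k _
    have h1 : A k ^ 2 = ν k * (A k ^ 2 / ν k) := by
      rw [mul_div_cancel₀ _ (hν0 k).ne']
    calc A k ^ 2 = ν k * (A k ^ 2 / ν k) := h1
      _ ≤ 2 * L * (A k ^ 2 / ν k) :=
          mul_le_mul_of_nonneg_right (hνle k) (div_nonneg (sq_nonneg _) (hν0 k).le)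
  calc ∑ k ∈ F, A k ^ 2 ≤ ∑ k ∈ F, 2 * L * (A k ^ 2 / ν k) := Finset.sum_le_sum hterm2
    _ = 2 * L * ∑ k ∈ F, A k ^ 2 / ν k := by rw [Finset.mul_sum]
    _ ≤ 2 * L * ∫ x in I, f x ^ 2 := mul_le_mul_of_nonneg_left hSle (by positivity)

private lemma aux_cs {ι : Type*} (u w : ι → ℝ) (hu : ∀ i, 0 ≤ u i) (hw : ∀ i, 0 < w i)
    (hsw : Summable w) (hsq : Summable (fun i => u i ^ 2 / w i)) (hsu : Summable u) :
    (∑' i, u i) ^ 2 ≤ (∑' i, w i) * ∑' i, u i ^ 2 / w i := by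
  set W := ∑' i, w i with hWdef
  set T := ∑' i, u i ^ 2 / w i with hTdef
  have hW0 : 0 ≤ W := tsum_nonneg fun i => (hw i).le
  have hT0 : 0 ≤ T := tsum_nonneg fun i => div_nonneg (sq_nonneg _) (hw i).le
  have key : ∑' i, u i ≤ Real.sqrt (W * T) := by
    apply Summable.tsum_le_of_sum_le hsu
    intro F
    have h1 : (∑ i ∈ F, u i) ^ 2 ≤ (∑ i ∈ F, w i) * ∑ i ∈ F, u i ^ 2 / w i :=
      Finset.sum_sq_le_sum_mul_sum_of_sq_eq_mul F (fun i _ => (hw i).le)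
        (fun i _ => div_nonneg (sq_nonneg _) (hw i).le)
        (fun i _ => by rw [mul_comm, div_mul_cancel₀ _ (hw i).ne'])
    have h2 : (∑ i ∈ F, w i) ≤ W := Summable.sum_le_tsum F (fun i _ => (hw i).le) hsw
    have h3 : (∑ i ∈ F, u i ^ 2 / w i) ≤ T :=
      Summable.sum_le_tsum F (fun i _ => div_nonneg (sq_nonneg _) (hw i).le) hsq
    have h4 : (∑ i ∈ F, u i) ^ 2 ≤ W * T :=
      h1.trans (mul_le_mul h2 h3 (Finset.sum_nonneg fun i _ =>
        div_nonneg (sq_nonneg _) (hw i).le) hW0)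
    have h5 : 0 ≤ ∑ i ∈ F, u i := Finset.sum_nonneg fun i _ => hu i
    exact (Real.le_sqrt h5 (mul_nonneg hW0 hT0)).2 h4
  have h6 : 0 ≤ ∑' i, u i := tsum_nonneg hu
  calc (∑' i, u i) ^ 2 ≤ (Real.sqrt (W * T)) ^ 2 := pow_le_pow_left₀ h6 key 2
    _ = W * T := Real.sq_sqrt (mul_nonneg hW0 hT0)

private noncomputable def aJfun (L : ℝ) : Bool × ℕ → ℝ := fun i =>
  cond i.1 ((2 * (i.2 : ℝ) + 1) * L) (-((2 * (i.2 : ℝ) + 3) * L))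

private def qJfun : Bool × ℕ → ℤ := fun i =>
  cond i.1 ((i.2 : ℤ) + 1) (-((i.2 : ℤ) + 1))

private noncomputable def Jset (L : ℝ) : Bool × ℕ → Set ℝ := fun i =>
  Set.Ioc (aJfun L i) (aJfun L i + 2 * L)

set_option maxHeartbeats 2000000 in
theorem cos_tail_energy_moment_bound
    (p L : ℝ) (hp : 1 < p) (hL : 0 < L) (f : ℝ → ℝ)
    (hf1 : Integrable f) (hf2 : MemLp f 2 (volume : Measure ℝ))
    (hmom : Integrable (fun x : ℝ => |x| ^ p * (f x) ^ 2)) :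
    (∑' k : ℕ, (1 / L) *
        (∫ x in {x : ℝ | L < |x|},
          f x * Real.cos (k * Real.pi * (x + L) / (2 * L))) ^ 2)
      ≤ 2 * (∑' j : ℕ, ((j : ℝ) + 1) ^ (-p)) *
        (L ^ (-p) * (∫ x in {x : ℝ | L < |x|}, |x| ^ p * (f x) ^ 2)
          + ∫ x in {x : ℝ | L < |x|}, (f x) ^ 2) := by
  classical
  set S : Set ℝ := {x : ℝ | L < |x|} with hSdef
  have hLne : L ≠ 0 := hL.ne'
  have hfsq : Integrable (fun x => f x ^ 2) (volume : Measure ℝ) := hf2.integrable_sq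
  set J : Bool × ℕ → Set ℝ := Jset L with hJdef
  have hq : ∀ i, aJfun L i + L = 2 * L * (qJfun i) := by
    rintro ⟨b, n⟩
    cases b <;> simp only [aJfun, qJfun, Bool.cond_true, Bool.cond_false] <;> push_cast <;> ring
  have hJm : ∀ i, MeasurableSet (J i) := fun i => measurableSet_Ioc
  have hJd : Pairwise (Function.onFun Disjoint J) := by
    rintro ⟨b, n⟩ ⟨b', n'⟩ hne
    have hc : ¬(b = b' ∧ n = n') := by
      intro hcc; exact hne (Prod.ext hcc.1 hcc.2)
    simp only [Function.onFun, hJdef, Jset, Set.Ioc_disjoint_Ioc]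
    cases b <;> cases b' <;>
      simp only [aJfun, Bool.cond_true, Bool.cond_false]
    · -- both negative
      have hnn' : n ≠ n' := fun hh => hc ⟨rfl, hh⟩
      rcases Nat.lt_or_ge n n' with hlt | hge
      · have hcast : (n : ℝ) + 1 ≤ (n' : ℝ) := by exact_mod_cast hlt
        refine min_le_iff.2 (Or.inr (le_max_iff.2 (Or.inl ?_)))
        nlinarith
      · have hlt' : n' < n := lt_of_le_of_ne hge (fun hh => hnn' hh.symm)
        have hcast : (n' : ℝ) + 1 ≤ (n : ℝ) := by exact_mod_cast hlt'
        refine min_le_iff.2 (Or.inl (le_max_iff.2 (Or.inr ?_)))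
        nlinarith
    · -- left negative, right positive
      refine min_le_iff.2 (Or.inl (le_max_iff.2 (Or.inr ?_)))
      nlinarith [Nat.cast_nonneg (α := ℝ) n, Nat.cast_nonneg (α := ℝ) n']
    · -- left positive, right negative
      refine min_le_iff.2 (Or.inr (le_max_iff.2 (Or.inl ?_)))
      nlinarith [Nat.cast_nonneg (α := ℝ) n, Nat.cast_nonneg (α := ℝ) n']
    · -- both positive
      have hnn' : n ≠ n' := fun hh => hc ⟨rfl, hh⟩
      rcases Nat.lt_or_ge n n' with hlt | hge
      · have hcast : (n : ℝ) + 1 ≤ (n' : ℝ) := by exact_mod_cast hlt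
        refine min_le_iff.2 (Or.inl (le_max_iff.2 (Or.inr ?_)))
        nlinarith
      · have hlt' : n' < n := lt_of_le_of_ne hge (fun hh => hnn' hh.symm)
        have hcast : (n' : ℝ) + 1 ≤ (n : ℝ) := by exact_mod_cast hlt'
        refine min_le_iff.2 (Or.inr (le_max_iff.2 (Or.inl ?_)))
        nlinarith
  have hJu : (⋃ i, J i) = S ∪ {-L} := by
    ext x
    simp only [Set.mem_iUnion, Set.mem_union, Set.mem_singleton_iff]
    constructor
    · rintro ⟨⟨b, n⟩, hx⟩
      cases b
      · simp only [hJdef, Jset, aJfun, Bool.cond_false, Set.mem_Ioc] at hx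
        have hn0 : (0 : ℝ) ≤ (n : ℝ) := Nat.cast_nonneg n
        have hx2 : x ≤ -L := by nlinarith [hx.2]
        rcases eq_or_lt_of_le hx2 with heq | hlt
        · exact Or.inr heq
        · refine Or.inl ?_
          show L < |x|
          have hlx : L < -x := by linarith
          exact hlx.trans_le (neg_le_abs x)
      · simp only [hJdef, Jset, aJfun, Bool.cond_true, Set.mem_Ioc] at hx
        have hn0 : (0 : ℝ) ≤ (n : ℝ) := Nat.cast_nonneg n
        refine Or.inl ?_
        show L < |x|
        have hlx : L < x := by nlinarith [hx.1]
        exact hlx.trans_le (le_abs_self x)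
    · rintro (hx | hx)
      · have hx' : L < |x| := hx
        rcases lt_abs.1 hx' with hpos | hneg
        · set t : ℝ := x / L with ht
          have hxt : x = t * L := by rw [ht, div_mul_cancel₀ _ hLne]
          have h1 : 1 < t := (one_lt_div hL).2 hpos
          set n : ℕ := ⌈(t - 3) / 2⌉₊ with hn
          have hup : (t - 3) / 2 ≤ (n : ℝ) := Nat.le_ceil _
          have hlow : (n : ℝ) < (t - 1) / 2 := by
            by_cases hc0 : (t - 3) / 2 ≤ 0
            · have hn0 : n = 0 := Nat.ceil_eq_zero.2 hc0
              rw [hn0]; push_cast; linarith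
            · push_neg at hc0
              have hcl := Nat.ceil_lt_add_one (le_of_lt hc0)
              rw [← hn] at hcl
              linarith
          refine ⟨(true, n), ?_⟩
          simp only [hJdef, Jset, aJfun, Bool.cond_true, Set.mem_Ioc]
          constructor
          · nlinarith
          · nlinarith
        · set s : ℝ := -x / L with hs
          have hxs : x = -(s * L) := by rw [hs, div_mul_cancel₀ _ hLne, neg_neg]
          have h1 : 1 < s := (one_lt_div hL).2 hneg
          set n : ℕ := ⌊(s - 1) / 2⌋₊ with hn
          have hb0 : 0 ≤ (s - 1) / 2 := by linarith
          have hlow : (n : ℝ) ≤ (s - 1) / 2 := Nat.floor_le hb0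
          have hup : (s - 1) / 2 < (n : ℝ) + 1 := Nat.lt_floor_add_one _
          refine ⟨(false, n), ?_⟩
          simp only [hJdef, Jset, aJfun, Bool.cond_false, Set.mem_Ioc]
          constructor
          · nlinarith
          · nlinarith
      · refine ⟨(false, 0), ?_⟩
        simp only [hJdef, Jset, aJfun, Bool.cond_false, Set.mem_Ioc]
        rw [hx]
        push_cast
        constructor <;> nlinarith
  have hJae : (⋃ i, J i) =ᵐ[(volume : Measure ℝ)] S := by
    rw [hJu]
    refine (MeasureTheory.ae_eq_set.2 ⟨?_, ?_⟩)
    · refine measure_mono_null (fun x hx => ?_) (Real.volume_singleton (a := -L))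
      rcases hx.1 with hh | hh
      · exact absurd hh hx.2
      · exact hh
    · have : S \ (S ∪ {-L}) = ∅ := Set.diff_eq_empty.2 Set.subset_union_left
      rw [this]
      simp
  set c : ℕ → ℝ → ℝ := fun k x => Real.cos ((k : ℝ) * π * (x + L) / (2 * L)) with hcdef
  have hck : ∀ k, Continuous (c k) := fun k => Real.continuous_cos.comp (by continuity)
  have hfc : ∀ k, Integrable (fun x => f x * c k x) (volume : Measure ℝ) := by
    intro k
    have hb : ∃ C, ∀ x : ℝ, ‖c k x‖ ≤ C :=
      ⟨1, fun x => by simpa [Real.norm_eq_abs, hcdef] using Real.abs_cos_le_one _⟩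
    have := Integrable.bdd_mul hf1 ((hck k).aestronglyMeasurable) (Filter.Eventually.of_forall hb.choose_spec)
    simpa [mul_comm] using this
  set A : ℕ → Bool × ℕ → ℝ := fun k i => ∫ x in J i, f x * c k x with hAdef
  set Ei : Bool × ℕ → ℝ := fun i => ∫ x in J i, f x ^ 2 with hEidef
  set Mi : Bool × ℕ → ℝ := fun i => ∫ x in J i, |x| ^ p * f x ^ 2 with hMidef
  set w : Bool × ℕ → ℝ := fun i => ((i.2 : ℝ) + 1) ^ (-p) with hwdef
  have hw0 : ∀ i, 0 < w i := fun i => Real.rpow_pos_of_pos (by positivity) _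
  have hwinv : ∀ i : Bool × ℕ, (w i)⁻¹ = ((i.2 : ℝ) + 1) ^ p := by
    intro i
    show (((i.2 : ℝ) + 1) ^ (-p))⁻¹ = _
    rw [Real.rpow_neg (by positivity), inv_inv]
  have hζs : Summable (fun n : ℕ => ((n : ℝ) + 1) ^ (-p)) := by
    have h1 : Summable (fun n : ℕ => (n : ℝ) ^ (-p)) :=
      Real.summable_nat_rpow.2 (by linarith)
    have h2 := (summable_nat_add_iff 1).2 h1
    exact h2.congr fun n => by push_cast; ring_nf
  have hw_sum : Summable w := by
    refine (summable_prod_of_nonneg (fun i => (hw0 i).le)).2 ⟨fun b => hζs, ?_⟩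
    exact (hasSum_fintype _).summable
  have hW : (∑' i, w i) = 2 * ∑' j : ℕ, ((j : ℝ) + 1) ^ (-p) := by
    rw [Summable.tsum_prod' hw_sum (fun b => hζs), tsum_fintype]
    simp only [Fintype.sum_bool]
    ring
  have hW0 : 0 ≤ ∑' i, w i := tsum_nonneg fun i => (hw0 i).le
  have hHa : ∀ k, HasSum (fun i => A k i) (∫ x in S, f x * c k x) := by
    intro k
    have h := hasSum_integral_iUnion hJm hJd ((hfc k).integrableOn)
    rwa [setIntegral_congr_set hJae] at h
  have hHE : HasSum Ei (∫ x in S, f x ^ 2) := by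
    have h := hasSum_integral_iUnion hJm hJd (hfsq.integrableOn)
    rwa [setIntegral_congr_set hJae] at h
  have hHM : HasSum Mi (∫ x in S, |x| ^ p * f x ^ 2) := by
    have h := hasSum_integral_iUnion hJm hJd (hmom.integrableOn)
    rwa [setIntegral_congr_set hJae] at h
  have hHabs : HasSum (fun i => ∫ x in J i, |f x|) (∫ x in S, |f x|) := by
    have h := hasSum_integral_iUnion hJm hJd (hf1.abs.integrableOn)
    rwa [setIntegral_congr_set hJae] at h
  have hBF : ∀ i, ∀ F : Finset ℕ, (∑ k ∈ F, (A k i) ^ 2) ≤ 2 * L * Ei i := by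
    intro i F
    exact bessel L hL (qJfun i) (aJfun L i) (hq i) f (hf1.integrableOn) (hfsq.integrableOn) F
  have hsk : ∀ i, Summable (fun k => (A k i) ^ 2) := fun i =>
    summable_of_sum_range_le (fun k => sq_nonneg _) (fun n => hBF i (Finset.range n))
  have htsk : ∀ i, (∑' k, (A k i) ^ 2) ≤ 2 * L * Ei i := fun i =>
    Real.tsum_le_of_sum_range_le (fun _ => sq_nonneg _) (fun n => hBF i (Finset.range n))
  have hKey : ∀ i, (w i)⁻¹ * (2 * L * Ei i) ≤ L * (L ^ (-p) * Mi i + Ei i) := by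
    rintro ⟨b, n⟩
    have habs : ∀ x ∈ J (b, n), (2 * (n : ℝ) + 1) * L ≤ |x| := by
      intro x hx
      cases b
      · simp only [hJdef, Jset, aJfun, Bool.cond_false, Set.mem_Ioc] at hx
        have hxx : (2 * (n : ℝ) + 1) * L ≤ -x := by nlinarith [hx.2]
        exact hxx.trans (neg_le_abs x)
      · simp only [hJdef, Jset, aJfun, Bool.cond_true, Set.mem_Ioc] at hx
        exact (hx.1).le.trans (le_abs_self x)
    have hpt : ∀ x ∈ J (b, n),
        2 * (((n : ℝ) + 1) ^ p) * f x ^ 2 ≤ L ^ (-p) * (|x| ^ p * f x ^ 2) + f x ^ 2 := by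
      intro x hx
      have h1 : (2 * (n : ℝ) + 1) * L ≤ |x| := habs x hx
      have hxL : (2 * (n : ℝ) + 1) ≤ |x| / L := (le_div_iff₀ hL).2 h1
      have h2 : ((2 * (n : ℝ) + 1)) ^ p ≤ (|x| / L) ^ p :=
        Real.rpow_le_rpow (by positivity) hxL (by linarith)
      have h3 : ((n : ℝ) + 1) ^ p ≤ (((2 * (n : ℝ) + 1)) ^ p + 1) / 2 := by
        have hcx := (convexOn_rpow (le_of_lt hp)).2
          (Set.mem_Ici.2 (by positivity : (0 : ℝ) ≤ 2 * (n : ℝ) + 1))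
          (Set.mem_Ici.2 (by norm_num : (0 : ℝ) ≤ 1))
          (by norm_num : (0 : ℝ) ≤ 1 / 2) (by norm_num : (0 : ℝ) ≤ 1 / 2) (by norm_num)
        simp only [smul_eq_mul] at hcx
        have harg : (1 / 2 : ℝ) * (2 * (n : ℝ) + 1) + (1 / 2) * 1 = (n : ℝ) + 1 := by ring
        rw [harg, Real.one_rpow] at hcx
        linarith
      have h4 : (|x| / L) ^ p = L ^ (-p) * |x| ^ p := by
        rw [Real.div_rpow (abs_nonneg x) hL.le, Real.rpow_neg hL.le]
        ring
      have h5 : 2 * (((n : ℝ) + 1) ^ p) ≤ L ^ (-p) * |x| ^ p + 1 := by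
        rw [← h4]; linarith
      have hf2x : (0 : ℝ) ≤ f x ^ 2 := sq_nonneg _
      calc 2 * (((n : ℝ) + 1) ^ p) * f x ^ 2 ≤ (L ^ (-p) * |x| ^ p + 1) * f x ^ 2 :=
            mul_le_mul_of_nonneg_right h5 hf2x
        _ = L ^ (-p) * (|x| ^ p * f x ^ 2) + f x ^ 2 := by ring
    have hint1 : IntegrableOn (fun x => 2 * (((n : ℝ) + 1) ^ p) * f x ^ 2) (J (b, n)) :=
      (hfsq.integrableOn).const_mul _
    have hint2 : IntegrableOn
        (fun x => L ^ (-p) * (|x| ^ p * f x ^ 2) + f x ^ 2) (J (b, n)) :=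
      ((hmom.integrableOn).const_mul _).add (hfsq.integrableOn)
    have hsi := setIntegral_mono_on hint1 hint2 (hJm (b, n)) hpt
    rw [integral_const_mul, integral_add ((hmom.integrableOn).const_mul _) (hfsq.integrableOn),
      integral_const_mul] at hsi
    rw [hwinv]
    calc ((n : ℝ) + 1) ^ p * (2 * L * Ei (b, n))
        = L * (2 * (((n : ℝ) + 1) ^ p) * Ei (b, n)) := by ring
      _ ≤ L * (L ^ (-p) * Mi (b, n) + Ei (b, n)) := by
          exact mul_le_mul_of_nonneg_left hsi hL.le
  set G : Bool × ℕ → ℝ := fun i => L * (L ^ (-p) * Mi i + Ei i) with hGdef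
  have hGs : Summable G := ((hHM.summable.mul_left _).add hHE.summable).mul_left L
  have hGts : (∑' i, G i) =
      L * (L ^ (-p) * (∫ x in S, |x| ^ p * f x ^ 2) + ∫ x in S, f x ^ 2) := by
    have h1 : (∑' i, G i) = L * ∑' i, (L ^ (-p) * Mi i + Ei i) :=
      ((hHM.summable.mul_left _).add hHE.summable).tsum_mul_left L
    rw [h1, Summable.tsum_add (hHM.summable.mul_left _) hHE.summable,
      hHM.summable.tsum_mul_left (L ^ (-p)), hHM.tsum_eq, hHE.tsum_eq]
  set u : (Bool × ℕ) × ℕ → ℝ := fun z => (A z.2 z.1) ^ 2 / w z.1 with hudef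
  have hu0 : ∀ z, 0 ≤ u z := fun z => div_nonneg (sq_nonneg _) (hw0 _).le
  have hui : ∀ i, Summable fun k => u (i, k) := by
    intro i
    simp only [hudef]
    exact (hsk i).div_const _
  have hti : ∀ i, (∑' k, u (i, k)) ≤ G i := by
    intro i
    simp only [hudef]
    calc (∑' k, (A k i) ^ 2 / w i) = (∑' k, (A k i) ^ 2) / w i := tsum_div_const
      _ ≤ (2 * L * Ei i) / w i := (div_le_div_iff_of_pos_right (hw0 i)).2 (htsk i)
      _ = (w i)⁻¹ * (2 * L * Ei i) := by rw [div_eq_mul_inv, mul_comm]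
      _ ≤ G i := hKey i
  have htnn : ∀ i, 0 ≤ ∑' k, u (i, k) := fun i => tsum_nonneg fun k => hu0 _
  have hsum_ik : Summable u :=
    (summable_prod_of_nonneg hu0).2 ⟨hui, Summable.of_nonneg_of_le htnn hti hGs⟩
  have hP1 : HasSum (fun i => ∑' k, u (i, k)) (∑' z, u z) :=
    hsum_ik.hasSum.prod_fiberwise (fun i => (hui i).hasSum)
  have huk : ∀ k, Summable fun i => u (i, k) := by
    intro k
    refine Summable.of_nonneg_of_le (fun i => hu0 _) (fun i => ?_) hGs
    have h1 : (A k i) ^ 2 ≤ 2 * L * Ei i := by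
      have hh := hBF i {k}
      simpa using hh
    simp only [hudef]
    calc (A k i) ^ 2 / w i
        ≤ (2 * L * Ei i) / w i := (div_le_div_iff_of_pos_right (hw0 i)).2 h1
      _ = (w i)⁻¹ * (2 * L * Ei i) := by rw [div_eq_mul_inv, mul_comm]
      _ ≤ G i := hKey i
  have hswap : Summable (fun z : ℕ × (Bool × ℕ) => u (z.2, z.1)) := by
    have h : Summable (u ∘ (Equiv.prodComm ℕ (Bool × ℕ))) :=
      ((Equiv.prodComm ℕ (Bool × ℕ)).summable_iff).2 hsum_ik
    simpa [Function.comp_def, Equiv.coe_prodComm, Prod.swap] using h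
  have hswap_eq : (∑' z : ℕ × (Bool × ℕ), u (z.2, z.1)) = ∑' z, u z := by
    have h := (Equiv.prodComm ℕ (Bool × ℕ)).tsum_eq (f := u)
    simpa [Equiv.coe_prodComm, Prod.swap] using h
  have hP2 : HasSum (fun k => ∑' i, u (i, k)) (∑' z, u z) := by
    have h := hswap.hasSum.prod_fiberwise (g := fun k => ∑' i, u (i, k))
      (fun k => (huk k).hasSum)
    rwa [hswap_eq] at h
  have hcs : ∀ k, (∫ x in S, f x * c k x) ^ 2 ≤ (∑' i, w i) * ∑' i, u (i, k) := by
    intro k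
    have hAS : ∀ i, |A k i| ≤ ∫ x in J i, |f x| := by
      intro i
      have h1 : |A k i| ≤ ∫ x in J i, |f x * c k x| := by
        have hni := norm_integral_le_integral_norm
          (μ := volume.restrict (J i)) (fun x => f x * c k x)
        simpa only [Real.norm_eq_abs] using hni
      refine h1.trans ?_
      refine integral_mono ((hfc k).abs.integrableOn) (hf1.abs.integrableOn) ?_
      intro x
      show |f x * c k x| ≤ |f x|
      rw [abs_mul]
      exact mul_le_of_le_one_right (abs_nonneg _) (Real.abs_cos_le_one _)
    have hsumabs : Summable fun i => |A k i| :=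
      Summable.of_nonneg_of_le (fun i => abs_nonneg _) hAS hHabs.summable
    have hsq' : Summable fun i => |A k i| ^ 2 / w i :=
      (huk k).congr fun i => by simp only [hudef, sq_abs]
    have hcs2 := aux_cs (fun i => |A k i|) w (fun i => abs_nonneg _) hw0 hw_sum hsq' hsumabs
    have habsa : |∫ x in S, f x * c k x| ≤ ∑' i, |A k i| := by
      rw [← (hHa k).tsum_eq]
      have hn : Summable fun i => ‖A k i‖ := by
        simpa [Real.norm_eq_abs] using hsumabs
      simpa [Real.norm_eq_abs] using norm_tsum_le_tsum_norm hn
    calc (∫ x in S, f x * c k x) ^ 2 = |∫ x in S, f x * c k x| ^ 2 := (sq_abs _).symm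
      _ ≤ (∑' i, |A k i|) ^ 2 := pow_le_pow_left₀ (abs_nonneg _) habsa 2
      _ ≤ (∑' i, w i) * ∑' i, |A k i| ^ 2 / w i := hcs2
      _ = (∑' i, w i) * ∑' i, u (i, k) := by
          congr 1
          refine tsum_congr fun i => ?_
          simp only [hudef]
          rw [sq_abs]
  have hboundS : Summable (fun k => (1 / L) * ((∑' i, w i) * ∑' i, u (i, k))) :=
    (hP2.summable.mul_left _).mul_left _
  have hLHS_S : Summable (fun k => (1 / L) * (∫ x in S, f x * c k x) ^ 2) := by
    refine Summable.of_nonneg_of_le (fun k => by positivity) (fun k => ?_) hboundS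
    exact mul_le_mul_of_nonneg_left (hcs k) (by positivity)
  have hmain : (∑' k : ℕ, (1 / L) * (∫ x in S, f x * c k x) ^ 2) ≤
      2 * (∑' j : ℕ, ((j : ℝ) + 1) ^ (-p)) *
        (L ^ (-p) * (∫ x in S, |x| ^ p * f x ^ 2) + ∫ x in S, f x ^ 2) := by
    have step1 : (∑' k : ℕ, (1 / L) * (∫ x in S, f x * c k x) ^ 2) ≤
        ∑' k, (1 / L) * ((∑' i, w i) * ∑' i, u (i, k)) :=
      Summable.tsum_le_tsum (fun k => mul_le_mul_of_nonneg_left (hcs k) (by positivity)) hLHS_S hboundS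
    have step2 : (∑' k, (1 / L) * ((∑' i, w i) * ∑' i, u (i, k))) =
        (1 / L) * ((∑' i, w i) * ∑' z, u z) := by
      rw [tsum_mul_left, tsum_mul_left, hP2.tsum_eq]
    have step3 : (∑' z, u z) ≤ ∑' i, G i := by
      rw [← hP1.tsum_eq]
      exact Summable.tsum_le_tsum hti hP1.summable hGs
    have step4 : (1 / L) * ((∑' i, w i) * ∑' z, u z) ≤
        (1 / L) * ((∑' i, w i) * ∑' i, G i) := by
      refine mul_le_mul_of_nonneg_left ?_ (by positivity)
      exact mul_le_mul_of_nonneg_left step3 hW0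
    have step5 : (1 / L) * ((∑' i, w i) * ∑' i, G i) =
        2 * (∑' j : ℕ, ((j : ℝ) + 1) ^ (-p)) *
          (L ^ (-p) * (∫ x in S, |x| ^ p * f x ^ 2) + ∫ x in S, f x ^ 2) := by
      rw [hW, hGts]
      field_simp
    calc (∑' k : ℕ, (1 / L) * (∫ x in S, f x * c k x) ^ 2)
        ≤ ∑' k, (1 / L) * ((∑' i, w i) * ∑' i, u (i, k)) := step1
      _ = (1 / L) * ((∑' i, w i) * ∑' z, u z) := step2
      _ ≤ (1 / L) * ((∑' i, w i) * ∑' i, G i) := step4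
      _ = _ := step5
  exact hmain
end

section
/- If p > 1, f ∈ L¹(ℝ) ∩ L²(ℝ) and ∫_ℝ |x|^p |f(x)|² dx < ∞, then f is COS-admissible, i.e., B(L) → 0 as L → ∞. -/
open MeasureTheory Real Filter Set Complex ENNReal

lemma measurable_liftIoc (T a : ℝ) [hT : Fact (0 < T)] {g : ℝ → ℂ} (hg : Measurable g) :
    Measurable (AddCircle.liftIoc T a g) := by
  have : AddCircle.liftIoc T a g
      = fun x => g (((AddCircle.measurableEquivIoc T a) x : Set.Ioc a (a+T)) : ℝ) := rfl
  rw [this]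
  exact hg.comp (measurable_subtype_coe.comp (AddCircle.measurableEquivIoc T a).measurable)

lemma parseval_interval (T aa : ℝ) [hT : Fact (0 < T)] (g : ℝ → ℝ) (hgm : Measurable g)
    (hint : IntegrableOn g (Ioc aa (aa + T)))
    (hsq : IntegrableOn (fun x => g x ^ 2) (Ioc aa (aa + T))) (ψ : ℕ → ℝ) :
    ∑' k : ℕ, ENNReal.ofReal
        ((∫ x in Ioc aa (aa + T), g x * Real.cos (2 * π * k * x / T + ψ k)) ^ 2)
      ≤ ENNReal.ofReal (T * ∫ x in Ioc aa (aa + T), g x ^ 2) := by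
  have hT0 : (0:ℝ) < T := hT.out
  set J : Set ℝ := Ioc aa (aa + T) with hJ
  set G : ℝ → ℂ := fun x => (g x : ℂ) with hG
  have hGm : Measurable G := Complex.measurable_ofReal.comp hgm
  set h : AddCircle T → ℂ := AddCircle.liftIoc T aa G with hh
  have hhm : Measurable h := measurable_liftIoc T aa hGm
  have hsqnn : 0 ≤ᵐ[volume.restrict J] fun x => g x ^ 2 :=
    Filter.Eventually.of_forall fun x => sq_nonneg _
  have hlintsq : ∫⁻ x in J, ENNReal.ofReal (g x ^ 2) ≠ ⊤ := by
    rw [← MeasureTheory.ofReal_integral_eq_lintegral_ofReal hsq hsqnn]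
    exact ENNReal.ofReal_ne_top
  have hhaar : (AddCircle.haarAddCircle : Measure (AddCircle T))
      = (ENNReal.ofReal T)⁻¹ • (volume : Measure (AddCircle T)) := by
    rw [AddCircle.volume_eq_smul_haarAddCircle, smul_smul,
      ENNReal.inv_mul_cancel (ENNReal.ofReal_pos.2 hT0).ne' ENNReal.ofReal_ne_top, one_smul]
  have hnormsq : ∀ x ∈ J, ‖h ↑x‖ ^ 2 = g x ^ 2 := by
    intro x hx
    rw [hh, AddCircle.liftIoc_coe_apply hx]
    simp [hG, Complex.norm_real, sq_abs]
  have hlint_vol : ∫⁻ t, (‖h t‖₊ : ℝ≥0∞) ^ (2:ℝ) ∂(volume : Measure (AddCircle T))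
      = ∫⁻ x in J, ENNReal.ofReal (g x ^ 2) := by
    rw [← AddCircle.lintegral_preimage T aa]
    refine setLIntegral_congr_fun measurableSet_Ioc (fun x hx => ?_)
    have h2 : ((2:ℝ)) = ((2:ℕ):ℝ) := by norm_num
    rw [h2, ENNReal.rpow_natCast, ← enorm_eq_nnnorm, ← ofReal_norm,
      ← ENNReal.ofReal_pow (norm_nonneg _), hnormsq x hx]
  have hmem : MemLp h 2 (AddCircle.haarAddCircle : Measure (AddCircle T)) := by
    constructor
    · exact hhm.aestronglyMeasurable
    · rw [eLpNorm_eq_lintegral_rpow_enorm_toReal two_ne_zero ENNReal.ofNat_ne_top]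
      refine ENNReal.rpow_lt_top_of_nonneg (by positivity) ?_
      rw [ENNReal.toReal_ofNat, hhaar, lintegral_smul_measure]
      simp only [enorm_eq_nnnorm]
      rw [hlint_vol]
      exact ENNReal.mul_ne_top (ENNReal.inv_ne_top.2 (ENNReal.ofReal_pos.2 hT0).ne') hlintsq
  set F := hmem.toLp h with hF
  have hcoeff : ∀ i : ℤ, fourierCoeff (⇑F) i = fourierCoeff h i := by
    intro i
    refine integral_congr_ae ?_
    filter_upwards [hmem.coeFn_toLp] with t ht
    rw [ht]
  have hpars : ∑' i : ℤ, ‖fourierCoeff (⇑F) i‖ ^ 2 = (1/T) * ∫ x in J, g x ^ 2 := by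
    rw [tsum_sq_fourierCoeff]
    have e1 : ∫ t, ‖(F : AddCircle T → ℂ) t‖ ^ 2 ∂(AddCircle.haarAddCircle)
        = ∫ t, ‖h t‖ ^ 2 ∂(AddCircle.haarAddCircle) := by
      refine integral_congr_ae ?_
      filter_upwards [hmem.coeFn_toLp] with t ht
      rw [ht]
    rw [e1, hhaar, integral_smul_measure, ← AddCircle.integral_preimage T aa (fun t => ‖h t‖ ^ 2)]
    have e2 : ∫ x in J, ‖h ↑x‖ ^ 2 = ∫ x in J, g x ^ 2 :=
      setIntegral_congr_fun measurableSet_Ioc fun x hx => hnormsq x hx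
    rw [e2, ENNReal.toReal_inv, ENNReal.toReal_ofReal hT0.le, smul_eq_mul, one_div]
  have hsumF : Summable fun i : ℤ => ‖fourierCoeff (⇑F) i‖ ^ 2 := by
    have h0 := (lp.memℓp (fourierBasis.repr F)).summable (by norm_num : 0 < (2:ℝ≥0∞).toReal)
    refine h0.congr fun i => ?_
    rw [fourierBasis_repr, ENNReal.toReal_ofNat, Real.rpow_two]
  have hle : aa ≤ aa + T := by linarith
  have hbd : ∀ k : ℕ, (∫ x in J, g x * Real.cos (2*π*k*x/T + ψ k)) ^ 2
      ≤ T^2 * ‖fourierCoeff h (-(k:ℤ))‖ ^ 2 := by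
    intro k
    set θ : ℝ → ℝ := fun x => 2*π*k*x/T + ψ k with hθ
    have hcont : Continuous fun x : ℝ => Complex.exp ((θ x : ℝ) * Complex.I) := by
      refine Complex.continuous_exp.comp ?_
      exact (Complex.continuous_ofReal.comp (by fun_prop)).mul continuous_const
    have hGint : IntegrableOn G J := hint.ofReal
    have hzint : IntegrableOn (fun x => Complex.exp ((θ x : ℝ) * Complex.I) * G x) J :=
      hGint.bdd_mul hcont.aestronglyMeasurable (c := 1)
        (Filter.Eventually.of_forall fun x => le_of_eq (Complex.norm_exp_ofReal_mul_I _))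
    have hre : ∫ x in J, g x * Real.cos (θ x)
        = (∫ x in J, Complex.exp ((θ x : ℝ) * Complex.I) * G x).re := by
      rw [← RCLike.re_eq_complex_re, ← integral_re hzint, RCLike.re_eq_complex_re]
      refine setIntegral_congr_fun measurableSet_Ioc (fun x hx => ?_)
      simp [hG, Complex.mul_re, Complex.exp_ofReal_mul_I_re]
      ring
    have hcoeq : ∫ x in J, (fourier (k:ℤ) (x : AddCircle T)) * G x
        = (T:ℂ) * fourierCoeff h (-(k:ℤ)) := by
      have h0 := fourierCoeff_eq_intervalIntegral h (-(k:ℤ)) aa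
      rw [neg_neg, intervalIntegral.integral_of_le hle] at h0
      simp only [smul_eq_mul] at h0
      have e : (∫ x in Ioc aa (aa+T), (fourier (k:ℤ) (x : AddCircle T)) * h ↑x)
          = ∫ x in J, (fourier (k:ℤ) (x : AddCircle T)) * G x := by
        refine setIntegral_congr_fun measurableSet_Ioc (fun x hx => ?_)
        rw [hh, AddCircle.liftIoc_coe_apply hx]
      have hTC : (T:ℂ) ≠ 0 := Complex.ofReal_ne_zero.2 hT0.ne'
      rw [e] at h0
      rw [h0, Complex.real_smul, ← mul_assoc]
      rw [show (T:ℂ) * ((1/T : ℝ) : ℂ) = 1 by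
        push_cast
        field_simp]
      rw [one_mul]
    have hsplit : ∀ x : ℝ, Complex.exp ((θ x : ℝ) * Complex.I)
        = Complex.exp ((ψ k : ℝ) * Complex.I) * fourier (k:ℤ) (x : AddCircle T) := by
      intro x
      rw [fourier_coe_apply, ← Complex.exp_add]
      congr 1
      have hTC : (T:ℂ) ≠ 0 := Complex.ofReal_ne_zero.2 hT0.ne'
      simp only [hθ]
      push_cast
      field_simp
      ring
    have hz : ∫ x in J, Complex.exp ((θ x : ℝ) * Complex.I) * G x
        = Complex.exp ((ψ k : ℝ) * Complex.I) * ((T:ℂ) * fourierCoeff h (-(k:ℤ))) := by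
      rw [← hcoeq, ← integral_const_mul]
      refine setIntegral_congr_fun measurableSet_Ioc (fun x hx => ?_)
      rw [hsplit x, mul_assoc]
    have hnormz : ‖∫ x in J, Complex.exp ((θ x : ℝ) * Complex.I) * G x‖
        = T * ‖fourierCoeff h (-(k:ℤ))‖ := by
      rw [hz, norm_mul, Complex.norm_exp_ofReal_mul_I, one_mul, norm_mul]
      simp [Complex.norm_real, abs_of_pos hT0]
    have h1 : |∫ x in J, g x * Real.cos (θ x)| ≤ T * ‖fourierCoeff h (-(k:ℤ))‖ := by
      rw [hre, ← hnormz]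
      exact Complex.abs_re_le_norm _
    have h2 : (∫ x in J, g x * Real.cos (θ x)) ^ 2
        ≤ (T * ‖fourierCoeff h (-(k:ℤ))‖) ^ 2 := by
      rw [← _root_.sq_abs]
      exact pow_le_pow_left₀ (abs_nonneg _) h1 2
    calc (∫ x in J, g x * Real.cos (2*π*k*x/T + ψ k)) ^ 2
        = (∫ x in J, g x * Real.cos (θ x)) ^ 2 := rfl
      _ ≤ (T * ‖fourierCoeff h (-(k:ℤ))‖) ^ 2 := h2
      _ = T^2 * ‖fourierCoeff h (-(k:ℤ))‖ ^ 2 := by ring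
  calc ∑' k : ℕ, ENNReal.ofReal
        ((∫ x in Ioc aa (aa + T), g x * Real.cos (2 * π * k * x / T + ψ k)) ^ 2)
      ≤ ∑' k : ℕ, ENNReal.ofReal (T^2 * ‖fourierCoeff (⇑F) (-(k:ℤ))‖ ^ 2) := by
        refine ENNReal.tsum_le_tsum fun k => ENNReal.ofReal_le_ofReal ?_
        rw [hcoeff]
        exact hbd k
    _ ≤ ∑' i : ℤ, ENNReal.ofReal (T^2 * ‖fourierCoeff (⇑F) i‖ ^ 2) := by
        refine ENNReal.tsum_comp_le_tsum_of_injective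
          (fun a b hab => ?_ : Function.Injective fun k : ℕ => -(k:ℤ)) _
        simpa using hab
    _ = ENNReal.ofReal (∑' i : ℤ, T^2 * ‖fourierCoeff (⇑F) i‖ ^ 2) :=
        (ENNReal.ofReal_tsum_of_nonneg (fun i => by positivity) (hsumF.mul_left _)).symm
    _ = ENNReal.ofReal (T * ∫ x in Ioc aa (aa + T), g x ^ 2) := by
        rw [tsum_mul_left, hpars]
        congr 1
        field_simp
        ring

lemma ennreal_cs (u v : ℤ → ENNReal) :
    ∑' n, u n * v n ≤ (∑' n, u n ^ (2:ℝ)) ^ ((1:ℝ)/2) * (∑' n, v n ^ (2:ℝ)) ^ ((1:ℝ)/2) := by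
  have hpq : Real.HolderConjugate 2 2 := Real.HolderConjugate.two_two
  rw [ENNReal.tsum_eq_iSup_sum]
  refine iSup_le fun s => ?_
  calc ∑ n ∈ s, u n * v n
      ≤ (∑ n ∈ s, u n ^ (2:ℝ)) ^ ((1:ℝ)/2) * (∑ n ∈ s, v n ^ (2:ℝ)) ^ ((1:ℝ)/2) :=
        ENNReal.inner_le_Lp_mul_Lq (s := s) u v hpq
    _ ≤ (∑' n, u n ^ (2:ℝ)) ^ ((1:ℝ)/2) * (∑' n, v n ^ (2:ℝ)) ^ ((1:ℝ)/2) := by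
        gcongr <;> exact ENNReal.sum_le_tsum s

lemma weight_summable {p : ℝ} (hp : 1 < p) :
    Summable (fun n : ℤ => (max |(n:ℝ)| 1) ^ (-p)) := by
  have h1 := Real.summable_abs_int_rpow hp
  have h2 : Summable (fun n : ℤ => if n = 0 then (1:ℝ) else 0) :=
    summable_of_ne_finset_zero (s := {0}) (by intro n hn; simp at hn; simp [hn])
  refine Summable.of_nonneg_of_le (fun n => Real.rpow_nonneg (by positivity) _) (fun n => ?_)
    (h1.add h2)
  by_cases hn : n = 0
  · subst hn
    simp [Real.zero_rpow (by linarith : -p ≠ 0), Real.one_rpow]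
  · have habs : (1:ℝ) ≤ |(n:ℝ)| := by
      rw [← Int.cast_abs]
      exact_mod_cast Int.one_le_abs (by exact_mod_cast hn)
    rw [max_eq_left habs]
    simp [hn]

lemma main_est (p : ℝ) (hp : 1 < p) (f : ℝ → ℝ) (hfm : Measurable f)
    (hf1 : Integrable f) (hf2 : MemLp f 2 (volume : Measure ℝ))
    (hmom : Integrable (fun x : ℝ => |x| ^ p * (f x) ^ 2))
    (L : ℝ) (hL : 1 ≤ L) :
    ∑' k : ℕ, (1 / L) *
        (∫ x in {x : ℝ | L < |x|}, f x * Real.cos (k * π * (x + L) / (2 * L))) ^ 2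
      ≤ (4 * (∑' n : ℤ, (max |(n:ℝ)| 1) ^ (-p)) * ∫ x, |x| ^ p * (f x) ^ 2) * L ^ (-p) := by
  have hL0 : (0:ℝ) < L := by linarith
  have hp0 : (0:ℝ) < p := by linarith
  haveI : Fact ((0:ℝ) < 4 * L) := ⟨by linarith⟩
  set W : ℝ := ∑' n : ℤ, (max |(n:ℝ)| 1) ^ (-p) with hWdef
  have hWsum := weight_summable hp
  set M : ℝ := ∫ x, |x| ^ p * (f x) ^ 2 with hMdef
  have hM0 : 0 ≤ M := integral_nonneg (fun x => by positivity)
  set tail : Set ℝ := {x : ℝ | L < |x|} with htaildef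
  have htail : MeasurableSet tail := measurableSet_lt measurable_const measurable_abs
  set g : ℝ → ℝ := tail.indicator f with hgdef
  have hgm : Measurable g := hfm.indicator htail
  have hgint : Integrable g := hf1.indicator htail
  have hfsq : Integrable (fun x => f x ^ 2) :=
    (memLp_two_iff_integrable_sq hfm.aestronglyMeasurable).1 hf2
  have hgsq_eq : ∀ x, g x ^ 2 = tail.indicator (fun y => f y ^ 2) x := by
    intro x
    by_cases hx : x ∈ tail <;> simp [hgdef, Set.indicator_of_mem, Set.indicator_of_notMem, hx]
  have hgsq : Integrable (fun x => g x ^ 2) :=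
    (hfsq.indicator htail).congr (Filter.Eventually.of_forall fun x => (hgsq_eq x).symm)
  have hgabs : ∀ x, |g x| ≤ |f x| := by
    intro x
    by_cases hx : x ∈ tail <;>
      simp [hgdef, Set.indicator_of_mem, Set.indicator_of_notMem, hx, abs_nonneg]
  -- intervals
  set I : ℤ → Set ℝ := fun n => Ioc (4*L*n) (4*L*n + 4*L) with hIdef
  have hImeas : ∀ n, MeasurableSet (I n) := fun n => measurableSet_Ioc
  have hIdisj : Pairwise (Function.onFun Disjoint I) := by
    intro m n hmn
    simp only [Function.onFun, hIdef]
    rw [Set.Ioc_disjoint_Ioc]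
    rcases hmn.lt_or_gt with h | h
    · have : (m:ℝ) + 1 ≤ n := by exact_mod_cast h
      exact min_le_of_left_le (le_max_of_le_right (by nlinarith))
    · have : (n:ℝ) + 1 ≤ m := by exact_mod_cast h
      exact min_le_of_right_le (le_max_of_le_left (by nlinarith))
  have hIunion : (⋃ n : ℤ, I n) = Set.univ := by
    have h0 := iUnion_Ioc_add_zsmul (by linarith : (0:ℝ) < 4 * L) 0
    rw [← h0]
    refine Set.iUnion_congr fun n => ?_
    simp only [hIdef, zero_add, zsmul_eq_mul]
    congr 1 <;> push_cast <;> ring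
  -- the coefficients
  set c : ℕ → ℝ := fun k => ∫ x in tail, f x * Real.cos (k * π * (x + L) / (2 * L)) with hcdef
  set a : ℕ → ℤ → ℝ :=
    fun k n => ∫ x in I n, g x * Real.cos (k * π * (x + L) / (2 * L)) with hadef
  have hcos_cont : ∀ k : ℕ, Continuous fun x : ℝ => Real.cos (k * π * (x + L) / (2 * L)) := by
    intro k; fun_prop
  have hgcos_int : ∀ k : ℕ,
      Integrable (fun x => g x * Real.cos (k * π * (x + L) / (2 * L))) := by
    intro k
    have := hgint.bdd_mul ((hcos_cont k).aestronglyMeasurable) (c := 1)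
      (Filter.Eventually.of_forall fun x => by rw [Real.norm_eq_abs]; exact Real.abs_cos_le_one _)
    exact this.congr (Filter.Eventually.of_forall fun x => by ring_nf)
  have hHasSum : ∀ k : ℕ, HasSum (fun n => a k n) (c k) := by
    intro k
    have h1 : c k = ∫ x, g x * Real.cos (k * π * (x + L) / (2 * L)) := by
      show (∫ x in tail, f x * Real.cos (k * π * (x + L) / (2 * L)))
        = ∫ x, g x * Real.cos (k * π * (x + L) / (2 * L))
      rw [← integral_indicator htail]
      congr 1
      funext x
      by_cases hx : x ∈ tail <;>
        simp [hgdef, Set.indicator_of_mem, Set.indicator_of_notMem, hx]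
    have h2 := hasSum_integral_iUnion hImeas hIdisj
      ((hgcos_int k).integrableOn (s := ⋃ n, I n))
    rw [hIunion] at h2
    simpa [h1, Measure.restrict_univ] using h2
  -- geometric bound
  set m : ℤ → ℝ := fun n => max |(n:ℝ)| 1 with hmdef
  have hm1 : ∀ n, 1 ≤ m n := fun n => le_max_right _ _
  have hm0 : ∀ n, 0 < m n := fun n => lt_of_lt_of_le one_pos (hm1 n)
  have hgeo : ∀ n : ℤ, ∀ x ∈ I n, L < |x| → m n * L ≤ |x| := by
    intro n x hx hLx
    simp only [hIdef, Set.mem_Ioc] at hx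
    rcases le_or_gt (1:ℤ) n with hn | hn
    · have hn' : (1:ℝ) ≤ (n:ℝ) := by exact_mod_cast hn
      have : m n = (n:ℝ) := by
        rw [hmdef]
        simp only []
        rw [abs_of_pos (by linarith), max_eq_left hn']
      rw [this]
      have hxpos : 0 < x := by nlinarith
      rw [abs_of_pos hxpos]
      nlinarith
    · rcases le_or_gt n (-2) with hn2 | hn2
      · have hn' : (n:ℝ) ≤ -2 := by exact_mod_cast hn2
        have : m n = -(n:ℝ) := by
          rw [hmdef]
          simp only []
          rw [abs_of_neg (by linarith), max_eq_left (by linarith)]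
        rw [this]
        have hxneg : x < 0 := by nlinarith
        rw [abs_of_neg hxneg]
        nlinarith
      · have hn0 : n = 0 ∨ n = -1 := by omega
        have : m n = 1 := by
          rcases hn0 with h | h <;> subst h <;> rw [hmdef] <;> norm_num
        rw [this, one_mul]
        exact hLx.le
  -- per-interval Parseval
  have harg : ∀ (k : ℕ) (x : ℝ),
      (k:ℝ) * π * (x + L) / (2*L) = 2*π*k*x/(4*L) + k*π/2 := by
    intro k x
    field_simp
    ring
  have hpar : ∀ n : ℤ, ∑' k : ℕ, ENNReal.ofReal ((a k n)^2)
      ≤ ENNReal.ofReal ((4*L) * ∫ x in I n, g x ^ 2) := by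
    intro n
    have h0 := parseval_interval (4*L) (4*L*n) g hgm hgint.integrableOn hgsq.integrableOn
      (fun k => k*π/2)
    have e : ∀ k : ℕ, (a k n) = ∫ x in Ioc (4*L*(n:ℝ)) (4*L*(n:ℝ) + 4*L),
        g x * Real.cos (2*π*k*x/(4*L) + k*π/2) := by
      intro k
      show (∫ x in I n, g x * Real.cos ((k:ℝ) * π * (x + L) / (2*L))) = _
      refine setIntegral_congr_fun (hImeas n) (fun x hx => ?_)
      rw [harg k x]
    calc ∑' k : ℕ, ENNReal.ofReal ((a k n)^2)
        = ∑' k : ℕ, ENNReal.ofReal ((∫ x in Ioc (4*L*(n:ℝ)) (4*L*(n:ℝ)+4*L),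
            g x * Real.cos (2*π*k*x/(4*L) + k*π/2))^2) := by
          congr 1
          funext k
          rw [e k]
      _ ≤ ENNReal.ofReal ((4*L) * ∫ x in Ioc (4*L*(n:ℝ)) (4*L*(n:ℝ)+4*L), g x ^2) := h0
  -- Cauchy-Schwarz step
  have habs2 : ∀ y : ℝ, |y| ^ (2:ℝ) = y ^ 2 := by
    intro y
    rw [show ((2:ℝ)) = ((2:ℕ):ℝ) by norm_num, Real.rpow_natCast, _root_.sq_abs]
  have hck : ∀ k : ℕ, ENNReal.ofReal ((c k)^2)
      ≤ ENNReal.ofReal W * ∑' n : ℤ, ENNReal.ofReal ((m n)^p * (a k n)^2) := by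
    intro k
    have hA : ENNReal.ofReal |c k| ≤ ∑' n : ℤ, ENNReal.ofReal |a k n| := by
      by_cases htop : (∑' n : ℤ, ENNReal.ofReal |a k n|) = ⊤
      · rw [htop]; exact le_top
      · have hsummable : Summable fun n : ℤ => |a k n| := by
          have h1 := ENNReal.summable_toReal htop
          refine h1.congr fun n => ?_
          rw [ENNReal.toReal_ofReal (abs_nonneg _)]
        have h1 : |c k| ≤ ∑' n, |a k n| := by
          rw [← (hHasSum k).tsum_eq]
          have := norm_tsum_le_tsum_norm (f := fun n : ℤ => a k n)
            (by simpa [Real.norm_eq_abs] using hsummable)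
          simpa [Real.norm_eq_abs] using this
        calc ENNReal.ofReal |c k| ≤ ENNReal.ofReal (∑' n, |a k n|) :=
              ENNReal.ofReal_le_ofReal h1
          _ = ∑' n, ENNReal.ofReal |a k n| :=
              ENNReal.ofReal_tsum_of_nonneg (fun n => abs_nonneg _) hsummable
    set u : ℤ → ℝ≥0∞ := fun n => ENNReal.ofReal ((m n) ^ (-(p/2))) with hudef
    set v : ℤ → ℝ≥0∞ := fun n => ENNReal.ofReal ((m n) ^ (p/2) * |a k n|) with hvdef
    have huv : ∀ n, ENNReal.ofReal |a k n| = u n * v n := by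
      intro n
      rw [hudef, hvdef]
      simp only []
      rw [← ENNReal.ofReal_mul (Real.rpow_nonneg (hm0 n).le _)]
      congr 1
      rw [← mul_assoc, ← Real.rpow_add (hm0 n)]
      norm_num
    have hu2 : ∀ n, u n ^ (2:ℝ) = ENNReal.ofReal ((m n) ^ (-p)) := by
      intro n
      rw [hudef]
      simp only []
      rw [ENNReal.ofReal_rpow_of_nonneg (Real.rpow_nonneg (hm0 n).le _) (by norm_num : (0:ℝ) ≤ 2)]
      congr 1
      rw [← Real.rpow_mul (hm0 n).le]
      norm_num
    have hv2 : ∀ n, v n ^ (2:ℝ) = ENNReal.ofReal ((m n)^p * (a k n)^2) := by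
      intro n
      rw [hvdef]
      simp only []
      rw [ENNReal.ofReal_rpow_of_nonneg
        (mul_nonneg (Real.rpow_nonneg (hm0 n).le _) (abs_nonneg _)) (by norm_num : (0:ℝ) ≤ 2)]
      congr 1
      rw [Real.mul_rpow (Real.rpow_nonneg (hm0 n).le _) (abs_nonneg _),
        ← Real.rpow_mul (hm0 n).le]
      rw [show p/2*2 = p by ring, habs2]
    have hW_e : (∑' n : ℤ, u n ^ (2:ℝ)) = ENNReal.ofReal W := by
      rw [hWdef]
      rw [ENNReal.ofReal_tsum_of_nonneg (fun n => Real.rpow_nonneg (by positivity) _) hWsum]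
      exact tsum_congr hu2
    have hCS := ennreal_cs u v
    have hsq2 : (ENNReal.ofReal |c k|) ^ (2:ℝ) ≤ ((∑' n, u n * v n)) ^ (2:ℝ) := by
      apply ENNReal.rpow_le_rpow _ (by norm_num : (0:ℝ) ≤ 2)
      calc ENNReal.ofReal |c k| ≤ ∑' n, ENNReal.ofReal |a k n| := hA
        _ = ∑' n, u n * v n := tsum_congr huv
    have hfinal : ((∑' n, u n * v n)) ^ (2:ℝ)
        ≤ ENNReal.ofReal W * ∑' n : ℤ, ENNReal.ofReal ((m n)^p * (a k n)^2) := by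
      calc ((∑' n, u n * v n)) ^ (2:ℝ)
          ≤ ((∑' n, u n ^ (2:ℝ)) ^ ((1:ℝ)/2) * (∑' n, v n ^ (2:ℝ)) ^ ((1:ℝ)/2)) ^ (2:ℝ) :=
            ENNReal.rpow_le_rpow hCS (by norm_num)
        _ = (∑' n, u n ^ (2:ℝ)) * (∑' n, v n ^ (2:ℝ)) := by
            rw [ENNReal.mul_rpow_of_nonneg _ _ (by norm_num : (0:ℝ) ≤ 2),
              ← ENNReal.rpow_mul, ← ENNReal.rpow_mul]
            norm_num
        _ = ENNReal.ofReal W * ∑' n : ℤ, ENNReal.ofReal ((m n)^p * (a k n)^2) := by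
            rw [hW_e]
            congr 1
            exact tsum_congr hv2
    calc ENNReal.ofReal ((c k)^2)
        = (ENNReal.ofReal |c k|) ^ (2:ℝ) := by
          rw [ENNReal.ofReal_rpow_of_nonneg (abs_nonneg _) (by norm_num : (0:ℝ) ≤ 2), habs2]
      _ ≤ ((∑' n, u n * v n)) ^ (2:ℝ) := hsq2
      _ ≤ ENNReal.ofReal W * ∑' n : ℤ, ENNReal.ofReal ((m n)^p * (a k n)^2) := hfinal
  have hW0 : 0 ≤ W := tsum_nonneg (fun n => Real.rpow_nonneg (by positivity) _)
  have hVn : ∀ n : ℤ, ENNReal.ofReal ((m n)^p) * ENNReal.ofReal ((4*L) * ∫ x in I n, g x ^2)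
      ≤ ENNReal.ofReal (4*L) *
        (ENNReal.ofReal (L^(-p)) * ∫⁻ x in I n, ENNReal.ofReal (|x|^p * g x^2)) := by
    intro n
    have hmp : (0:ℝ) ≤ (m n)^p := Real.rpow_nonneg (hm0 n).le _
    rw [ENNReal.ofReal_mul (by linarith : (0:ℝ) ≤ 4*L), mul_left_comm]
    refine mul_le_mul_right ?_ _
    calc ENNReal.ofReal ((m n)^p) * ENNReal.ofReal (∫ x in I n, g x ^2)
        = ENNReal.ofReal ((m n)^p) * ∫⁻ x in I n, ENNReal.ofReal (g x ^2) := by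
          congr 1
          exact MeasureTheory.ofReal_integral_eq_lintegral_ofReal hgsq.integrableOn
            (Filter.Eventually.of_forall fun x => sq_nonneg _)
      _ = ∫⁻ x in I n, ENNReal.ofReal ((m n)^p) * ENNReal.ofReal (g x ^2) :=
          (lintegral_const_mul' _ _ ENNReal.ofReal_ne_top).symm
      _ ≤ ∫⁻ x in I n, ENNReal.ofReal (L^(-p) * (|x|^p * g x^2)) := by
          refine setLIntegral_mono' (hImeas n) (fun x hx => ?_)
          rw [← ENNReal.ofReal_mul hmp]
          refine ENNReal.ofReal_le_ofReal ?_
          by_cases hgx : g x = 0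
          · rw [hgx]
            simp only [ne_eq, OfNat.ofNat_ne_zero, not_false_eq_true, zero_pow, mul_zero]
            positivity
          · have hxtail : x ∈ tail := by
              by_contra hxt
              exact hgx (Set.indicator_of_notMem hxt f)
            have hLx : L < |x| := hxtail
            have hmle : m n ≤ |x| / L := by
              rw [le_div_iff₀ hL0]
              exact hgeo n x hx hLx
            have h1 : (m n)^p ≤ (|x|/L)^p :=
              Real.rpow_le_rpow (hm0 n).le hmle hp0.le
            have h2 : (|x|/L)^p = L^(-p) * |x|^p := by
              rw [Real.div_rpow (abs_nonneg _) hL0.le, Real.rpow_neg hL0.le]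
              ring
            calc (m n)^p * g x^2 ≤ (|x|/L)^p * g x^2 :=
                  mul_le_mul_of_nonneg_right h1 (sq_nonneg _)
              _ = L^(-p) * (|x|^p * g x^2) := by rw [h2]; ring
      _ = ENNReal.ofReal (L^(-p)) * ∫⁻ x in I n, ENNReal.ofReal (|x|^p * g x^2) := by
          rw [← lintegral_const_mul' _ _ ENNReal.ofReal_ne_top]
          refine setLIntegral_congr_fun (hImeas n) (fun x hx => ?_)
          rw [← ENNReal.ofReal_mul (Real.rpow_nonneg hL0.le _)]
  have hsum_n : ∑' n : ℤ, ∫⁻ x in I n, ENNReal.ofReal (|x|^p * g x^2) ≤ ENNReal.ofReal M := by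
    rw [← lintegral_iUnion hImeas hIdisj, hIunion, Measure.restrict_univ]
    calc ∫⁻ x, ENNReal.ofReal (|x|^p * g x^2)
        ≤ ∫⁻ x, ENNReal.ofReal (|x|^p * f x^2) := by
          refine lintegral_mono fun x => ENNReal.ofReal_le_ofReal ?_
          refine mul_le_mul_of_nonneg_left ?_ (Real.rpow_nonneg (abs_nonneg _) _)
          rw [← _root_.sq_abs (g x), ← _root_.sq_abs (f x)]
          exact pow_le_pow_left₀ (abs_nonneg _) (hgabs x) 2
      _ = ENNReal.ofReal M :=
          (MeasureTheory.ofReal_integral_eq_lintegral_ofReal hmom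
            (Filter.Eventually.of_forall fun x => by positivity)).symm
  have hQ : ∑' k : ℕ, ENNReal.ofReal ((1/L) * (c k)^2)
      ≤ ENNReal.ofReal ((4 * W * M) * L^(-p)) := by
    calc ∑' k : ℕ, ENNReal.ofReal ((1/L) * (c k)^2)
        = ENNReal.ofReal (1/L) * ∑' k : ℕ, ENNReal.ofReal ((c k)^2) := by
          rw [← ENNReal.tsum_mul_left]
          exact tsum_congr fun k => ENNReal.ofReal_mul (by positivity)
      _ ≤ ENNReal.ofReal (1/L) *
          ∑' k : ℕ, (ENNReal.ofReal W * ∑' n : ℤ, ENNReal.ofReal ((m n)^p * (a k n)^2)) :=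
          mul_le_mul_right (ENNReal.tsum_le_tsum hck) _
      _ = ENNReal.ofReal (1/L) * (ENNReal.ofReal W *
            ∑' n : ℤ, ∑' k : ℕ, ENNReal.ofReal ((m n)^p * (a k n)^2)) := by
          rw [ENNReal.tsum_mul_left, ENNReal.tsum_comm]
      _ = ENNReal.ofReal (1/L) * (ENNReal.ofReal W *
            ∑' n : ℤ, ENNReal.ofReal ((m n)^p) * ∑' k : ℕ, ENNReal.ofReal ((a k n)^2)) := by
          congr 2
          refine tsum_congr fun n => ?_
          rw [← ENNReal.tsum_mul_left]
          exact tsum_congr fun k => ENNReal.ofReal_mul (Real.rpow_nonneg (hm0 n).le _)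
      _ ≤ ENNReal.ofReal (1/L) * (ENNReal.ofReal W *
            ∑' n : ℤ, ENNReal.ofReal ((m n)^p) * ENNReal.ofReal ((4*L) * ∫ x in I n, g x ^2)) := by
          refine mul_le_mul_right (mul_le_mul_right (ENNReal.tsum_le_tsum fun n => ?_) _) _
          exact mul_le_mul_right (hpar n) _
      _ ≤ ENNReal.ofReal (1/L) * (ENNReal.ofReal W *
            ∑' n : ℤ, ENNReal.ofReal (4*L) *
              (ENNReal.ofReal (L^(-p)) * ∫⁻ x in I n, ENNReal.ofReal (|x|^p * g x^2))) := by
          refine mul_le_mul_right (mul_le_mul_right (ENNReal.tsum_le_tsum fun n => hVn n) _) _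
      _ = ENNReal.ofReal (1/L) * (ENNReal.ofReal W * (ENNReal.ofReal (4*L) *
            (ENNReal.ofReal (L^(-p)) *
              ∑' n : ℤ, ∫⁻ x in I n, ENNReal.ofReal (|x|^p * g x^2)))) := by
          rw [ENNReal.tsum_mul_left, ENNReal.tsum_mul_left]
      _ ≤ ENNReal.ofReal (1/L) * (ENNReal.ofReal W * (ENNReal.ofReal (4*L) *
            (ENNReal.ofReal (L^(-p)) * ENNReal.ofReal M))) :=
          mul_le_mul_right (mul_le_mul_right (mul_le_mul_right
            (mul_le_mul_right hsum_n _) _) _) _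
      _ = ENNReal.ofReal ((4 * W * M) * L^(-p)) := by
          rw [← ENNReal.ofReal_mul (by positivity : (0:ℝ) ≤ L^(-p)),
            ← ENNReal.ofReal_mul (by positivity : (0:ℝ) ≤ 4*L),
            ← ENNReal.ofReal_mul hW0,
            ← ENNReal.ofReal_mul (by positivity : (0:ℝ) ≤ 1/L)]
          congr 1
          field_simp
  have hgoal : ∑' k : ℕ, (1/L) *
      (∫ x in {x : ℝ | L < |x|}, f x * Real.cos (k * π * (x + L) / (2 * L))) ^ 2
      ≤ (4 * W * M) * L^(-p) := by
    have hterm : ∀ k : ℕ, (1/L) * (c k)^2 = (ENNReal.ofReal ((1/L) * (c k)^2)).toReal :=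
      fun k => (ENNReal.toReal_ofReal (by positivity)).symm
    calc ∑' k : ℕ, (1/L) * (c k)^2
        = (∑' k : ℕ, ENNReal.ofReal ((1/L) * (c k)^2)).toReal := by
          rw [ENNReal.tsum_toReal_eq (fun k => ENNReal.ofReal_ne_top)]
          exact tsum_congr hterm
      _ ≤ (4 * W * M) * L^(-p) := ENNReal.toReal_le_of_le_ofReal (by positivity) hQ
  exact hgoal

theorem cos_admissible_of_moment
    (p : ℝ) (hp : 1 < p) (f : ℝ → ℝ)
    (hf1 : Integrable f) (hf2 : MemLp f 2 (volume : Measure ℝ))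
    (hmom : Integrable (fun x : ℝ => |x| ^ p * (f x) ^ 2)) :
    Tendsto (fun L : ℝ => ∑' k : ℕ, (1 / L) *
        (∫ x in {x : ℝ | L < |x|},
          f x * Real.cos (k * Real.pi * (x + L) / (2 * L))) ^ 2)
      atTop (nhds 0) := by
  have hsm := hf1.aestronglyMeasurable
  set f' := hsm.mk f with hf'def
  have hfm' : Measurable f' := hsm.stronglyMeasurable_mk.measurable
  have hae : f =ᵐ[volume] f' := hsm.ae_eq_mk
  have hf1' : Integrable f' := hf1.congr hae
  have hf2' : MemLp f' 2 (volume : Measure ℝ) := hf2.ae_eq hae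
  have hmom' : Integrable (fun x : ℝ => |x| ^ p * (f' x) ^ 2) :=
    hmom.congr (by filter_upwards [hae] with x hx; rw [hx])
  have hfun : ∀ L : ℝ, (∑' k : ℕ, (1 / L) *
        (∫ x in {x : ℝ | L < |x|}, f x * Real.cos (k * π * (x + L) / (2 * L))) ^ 2)
      = ∑' k : ℕ, (1 / L) *
        (∫ x in {x : ℝ | L < |x|}, f' x * Real.cos (k * π * (x + L) / (2 * L))) ^ 2 := by
    intro L
    refine tsum_congr fun k => ?_
    congr 2
    refine setIntegral_congr_ae (measurableSet_lt measurable_const measurable_abs) ?_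
    filter_upwards [hae] with x hx _
    rw [hx]
  set W : ℝ := ∑' n : ℤ, (max |(n:ℝ)| 1) ^ (-p) with hW
  set M : ℝ := ∫ x, |x| ^ p * (f' x) ^ 2 with hM
  have hub : ∀ᶠ L in atTop, (∑' k : ℕ, (1 / L) *
        (∫ x in {x : ℝ | L < |x|}, f x * Real.cos (k * π * (x + L) / (2 * L))) ^ 2)
      ≤ (4 * W * M) * L ^ (-p) := by
    filter_upwards [eventually_ge_atTop (1:ℝ)] with L hL
    rw [hfun L]
    exact main_est p hp f' hfm' hf1' hf2' hmom' L hL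
  have hlb : ∀ᶠ L in atTop, 0 ≤ ∑' k : ℕ, (1 / L) *
        (∫ x in {x : ℝ | L < |x|}, f x * Real.cos (k * π * (x + L) / (2 * L))) ^ 2 := by
    filter_upwards [eventually_ge_atTop (1:ℝ)] with L hL
    exact tsum_nonneg fun k =>
      mul_nonneg (div_nonneg zero_le_one (by linarith)) (sq_nonneg _)
  have hupper : Tendsto (fun L : ℝ => (4 * W * M) * L ^ (-p)) atTop (nhds 0) := by
    have h1 := tendsto_rpow_neg_atTop (by linarith : (0:ℝ) < p)
    have h2 := h1.const_mul (4 * W * M)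
    simpa using h2
  exact squeeze_zero' hlb hub hupper
end

section
/- Let f be a probability density on ℝ with 0 ≤ f ≤ M and ∫_ℝ |x|^{1+ε} f(x) dx = m < ∞ for some ε > 0. Then the COS tail energy satisfies B(L) ≤ 4 ζ(1+ε) M m L^{-(1+ε)} for all L > 0; in particular f is COS-admissible. -/
open MeasureTheory Real Filter

/-- Interval integrability of a bounded measurable function. -/
lemma aux_II_bdd {g : ℝ → ℝ} (hg : Measurable g) {C : ℝ} (hgC : ∀ x, |g x| ≤ C) (a b : ℝ) :
    IntervalIntegrable g volume a b := by
  rw [intervalIntegrable_iff]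
  apply Measure.integrableOn_of_bounded
  · rw [Set.uIoc, Real.volume_Ioc]; exact ENNReal.ofReal_ne_top
  · exact hg.aestronglyMeasurable
  · exact ae_of_all _ (fun x => hgC x)

lemma aux_cos_block_integral (L : ℝ) (hL : 0 < L) (a : ℝ) (n : ℤ) (han : a + L = 2*n*L) (d : ℤ) :
    ∫ x in a..(a+2*L), Real.cos (d*π*(x+L)/(2*L)) = if d = 0 then 2*L else 0 := by
  rcases eq_or_ne d 0 with hd | hd
  · simp only [hd, if_pos rfl, Int.cast_zero, zero_mul, zero_div, Real.cos_zero]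
    simp [intervalIntegral.integral_const]
  · rw [if_neg hd]
    set c : ℝ := d*π/(2*L) with hc
    have hc0 : c ≠ 0 := by
      apply div_ne_zero
      · exact mul_ne_zero (Int.cast_ne_zero.2 hd) Real.pi_ne_zero
      · linarith
    have key : ∀ x : ℝ, (d:ℝ)*π*(x+L)/(2*L) = c*x + c*L := by
      intro x; rw [hc]; ring
    have hderiv : ∀ x : ℝ, HasDerivAt (fun y => Real.sin (c*y + c*L) / c) (Real.cos (c*x + c*L)) x := by
      intro x
      have h1 : HasDerivAt (fun y : ℝ => c*y + c*L) c x := by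
        simpa using ((hasDerivAt_id x).const_mul c).add_const (c*L)
      have h2 := (Real.hasDerivAt_sin (c*x + c*L)).comp x h1
      have h3 := h2.div_const c
      rw [mul_div_cancel_right₀ _ hc0] at h3
      exact h3
    have hint : ∫ x in a..(a+2*L), Real.cos (c*x + c*L)
        = Real.sin (c*(a+2*L) + c*L) / c - Real.sin (c*a + c*L) / c := by
      apply intervalIntegral.integral_eq_sub_of_hasDerivAt (fun x _ => hderiv x)
      exact (Real.continuous_cos.comp (by continuity)).intervalIntegrable _ _
    have ha : a = 2*(n:ℝ)*L - L := by linarith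
    have e1 : c*(a+2*L) + c*L = (d*(n+1) : ℤ)*π := by
      rw [hc, ha]; push_cast; field_simp; ring
    have e2 : c*a + c*L = (d*n : ℤ)*π := by
      rw [hc, ha]; push_cast; field_simp; ring
    calc ∫ x in a..(a+2*L), Real.cos (d*π*(x+L)/(2*L))
        = ∫ x in a..(a+2*L), Real.cos (c*x + c*L) := by
          apply intervalIntegral.integral_congr; intro x _; dsimp only; rw [key]
      _ = Real.sin (c*(a+2*L) + c*L) / c - Real.sin (c*a + c*L) / c := hint
      _ = 0 := by rw [e1, e2, Real.sin_int_mul_pi, Real.sin_int_mul_pi]; simp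

lemma aux_cos_orth (L : ℝ) (hL : 0 < L) (a : ℝ) (n : ℤ) (han : a + L = 2*n*L) (k l : ℕ) :
    ∫ x in a..(a+2*L), Real.cos (k*π*(x+L)/(2*L)) * Real.cos (l*π*(x+L)/(2*L))
      = if k = l then (if k = 0 then 2*L else L) else 0 := by
  have hpt : ∀ x : ℝ, Real.cos (k*π*(x+L)/(2*L)) * Real.cos (l*π*(x+L)/(2*L))
      = (Real.cos ((((k:ℤ)-l : ℤ):ℝ)*π*(x+L)/(2*L)) + Real.cos ((((k:ℤ)+l : ℤ):ℝ)*π*(x+L)/(2*L)))/2 := by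
    intro x
    have hA : ((((k:ℤ)-l : ℤ):ℝ))*π*(x+L)/(2*L) = k*π*(x+L)/(2*L) - l*π*(x+L)/(2*L) := by
      push_cast; ring
    have hB : ((((k:ℤ)+l : ℤ):ℝ))*π*(x+L)/(2*L) = k*π*(x+L)/(2*L) + l*π*(x+L)/(2*L) := by
      push_cast; ring
    rw [hA, hB, Real.cos_sub, Real.cos_add]
    ring
  have hcont : ∀ d : ℤ, Continuous (fun x : ℝ => Real.cos ((d:ℝ)*π*(x+L)/(2*L))) := by
    intro d; exact Real.continuous_cos.comp (by continuity)
  calc ∫ x in a..(a+2*L), Real.cos (k*π*(x+L)/(2*L)) * Real.cos (l*π*(x+L)/(2*L))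
      = ∫ x in a..(a+2*L), (Real.cos ((((k:ℤ)-l : ℤ):ℝ)*π*(x+L)/(2*L)) + Real.cos ((((k:ℤ)+l : ℤ):ℝ)*π*(x+L)/(2*L)))/2 := by
        apply intervalIntegral.integral_congr; intro x _; dsimp only; rw [hpt]
    _ = ((∫ x in a..(a+2*L), Real.cos ((((k:ℤ)-l : ℤ):ℝ)*π*(x+L)/(2*L)))
        + ∫ x in a..(a+2*L), Real.cos ((((k:ℤ)+l : ℤ):ℝ)*π*(x+L)/(2*L)))/2 := by
        rw [intervalIntegral.integral_div, intervalIntegral.integral_add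
          (((hcont _).intervalIntegrable _ _)) (((hcont _).intervalIntegrable _ _))]
    _ = ((if ((k:ℤ)-l) = 0 then 2*L else 0) + (if ((k:ℤ)+l) = 0 then 2*L else 0))/2 := by
        rw [aux_cos_block_integral L hL a n han, aux_cos_block_integral L hL a n han]
    _ = if k = l then (if k = 0 then 2*L else L) else 0 := by
        rcases eq_or_ne k l with h | h
        · subst h
          rcases eq_or_ne k 0 with h0 | h0
          · subst h0; norm_num
          · have : ((k:ℤ)+k) ≠ 0 := by positivity
            simp [this, h0]
        · have h1 : ((k:ℤ)-l) ≠ 0 := by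
            simpa [sub_eq_zero] using fun hh => h (Int.ofNat_inj.mp hh)
          rcases eq_or_ne ((k:ℤ)+l) 0 with hz | hz
          · have hk0 : k = 0 := by omega
            have hl0 : l = 0 := by omega
            exact absurd (hk0.trans hl0.symm) h
          · simp [h1, hz, h]

lemma aux_bessel_finite (L : ℝ) (hL : 0 < L) (a : ℝ) (n : ℤ) (han : a + L = 2*n*L)
    (g : ℝ → ℝ) (hg : Measurable g) (C : ℝ) (hgC : ∀ x, |g x| ≤ C) (s : Finset ℕ) :
    ∑ k ∈ s, (∫ x in a..(a+2*L), g x * Real.cos (k*π*(x+L)/(2*L)))^2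
      ≤ 2*L * ∫ x in a..(a+2*L), (g x)^2 := by
  set φ : ℕ → ℝ → ℝ := fun k x => Real.cos (k*π*(x+L)/(2*L)) with hφ
  have hφcont : ∀ k, Continuous (φ k) := fun k => Real.continuous_cos.comp (by continuity)
  have hφbd : ∀ k x, |φ k x| ≤ 1 := fun k x => Real.abs_cos_le_one _
  set d : ℕ → ℝ := fun k => ∫ x in a..(a+2*L), g x * φ k x with hd
  set nk : ℕ → ℝ := fun k => if k = 0 then 2*L else L with hnk
  have hnkpos : ∀ k, 0 < nk k := by intro k; simp only [hnk]; split <;> linarith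
  have hnkle : ∀ k, nk k ≤ 2*L := by intro k; simp only [hnk]; split <;> linarith
  set γ : ℕ → ℝ := fun k => d k / nk k with hγ
  have hC0 : 0 ≤ C := le_trans (abs_nonneg _) (hgC 0)
  have hgII : IntervalIntegrable g volume a (a+2*L) := aux_II_bdd hg hgC _ _
  have hgφII : ∀ k, IntervalIntegrable (fun x => g x * φ k x) volume a (a+2*L) := by
    intro k
    apply aux_II_bdd (hg.mul (hφcont k).measurable) (C := C)
    intro x
    rw [Pi.mul_apply, abs_mul]
    calc |g x| * |φ k x| ≤ C * 1 := mul_le_mul (hgC x) (hφbd k x) (abs_nonneg _) hC0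
      _ = C := mul_one C
  have hg2II : IntervalIntegrable (fun x => (g x)^2) volume a (a+2*L) := by
    apply aux_II_bdd (hg.pow_const 2) (C := C^2)
    intro x
    rw [abs_pow]
    exact pow_le_pow_left₀ (abs_nonneg _) (hgC x) 2
  have hI : ∀ k l : ℕ, ∫ x in a..(a+2*L), φ k x * φ l x
      = if k = l then (if k = 0 then 2*L else L) else 0 := fun k l => aux_cos_orth L hL a n han k l
  have hAII : IntervalIntegrable (fun x => ∑ k ∈ s, (2*γ k) * (g x * φ k x)) volume a (a+2*L) := by
    have h := IntervalIntegrable.sum s (f := fun k (x:ℝ) => (2*γ k) * (g x * φ k x))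
      (fun k _ => (hgφII k).const_mul _)
    have heq : (∑ k ∈ s, fun x : ℝ => (2*γ k) * (g x * φ k x))
        = fun x : ℝ => ∑ k ∈ s, (2*γ k) * (g x * φ k x) := by
      funext x; simp [Finset.sum_apply]
    rwa [heq] at h
  have hBII : IntervalIntegrable (fun x => ∑ k ∈ s, ∑ l ∈ s, (γ k * γ l) * (φ k x * φ l x)) volume a (a+2*L) := by
    have : Continuous (fun x => ∑ k ∈ s, ∑ l ∈ s, (γ k * γ l) * (φ k x * φ l x)) := by
      apply continuous_finset_sum; intro k _
      apply continuous_finset_sum; intro l _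
      exact continuous_const.mul ((hφcont k).mul (hφcont l))
    exact this.intervalIntegrable _ _
  have hptw : ∀ x : ℝ, (g x - ∑ k ∈ s, γ k * φ k x)^2
      = ((g x)^2 - ∑ k ∈ s, (2*γ k) * (g x * φ k x))
        + ∑ k ∈ s, ∑ l ∈ s, (γ k * γ l) * (φ k x * φ l x) := by
    intro x
    have h1 : 2 * g x * ∑ k ∈ s, γ k * φ k x = ∑ k ∈ s, (2*γ k) * (g x * φ k x) := by
      rw [Finset.mul_sum]
      apply Finset.sum_congr rfl; intro k _; ring
    have h2 : (∑ k ∈ s, γ k * φ k x)^2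
        = ∑ k ∈ s, ∑ l ∈ s, (γ k * γ l) * (φ k x * φ l x) := by
      rw [sq, Finset.sum_mul_sum]
      apply Finset.sum_congr rfl; intro k _
      apply Finset.sum_congr rfl; intro l _; ring
    rw [sub_sq, h2, h1]
  have hub : a ≤ a + 2*L := by linarith
  have hnonneg : 0 ≤ ∫ x in a..(a+2*L), (g x - ∑ k ∈ s, γ k * φ k x)^2 :=
    intervalIntegral.integral_nonneg hub (fun u _ => sq_nonneg _)
  have hexp : ∫ x in a..(a+2*L), (g x - ∑ k ∈ s, γ k * φ k x)^2
      = (∫ x in a..(a+2*L), (g x)^2) - ∑ k ∈ s, (d k)^2 / nk k := by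
    have e0 : ∫ x in a..(a+2*L), (g x - ∑ k ∈ s, γ k * φ k x)^2
        = ∫ x in a..(a+2*L), (((g x)^2 - ∑ k ∈ s, (2*γ k) * (g x * φ k x))
          + ∑ k ∈ s, ∑ l ∈ s, (γ k * γ l) * (φ k x * φ l x)) := by
      apply intervalIntegral.integral_congr; intro x _; exact hptw x
    rw [e0, intervalIntegral.integral_add (hg2II.sub hAII) hBII,
        intervalIntegral.integral_sub hg2II hAII]
    have eA : ∫ x in a..(a+2*L), ∑ k ∈ s, (2*γ k) * (g x * φ k x)
        = ∑ k ∈ s, (2*γ k) * d k := by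
      rw [intervalIntegral.integral_finset_sum (fun k _ => (hgφII k).const_mul _)]
      apply Finset.sum_congr rfl; intro k _
      rw [intervalIntegral.integral_const_mul]
    have eB : ∫ x in a..(a+2*L), ∑ k ∈ s, ∑ l ∈ s, (γ k * γ l) * (φ k x * φ l x)
        = ∑ k ∈ s, (γ k)^2 * nk k := by
      rw [intervalIntegral.integral_finset_sum]
      · apply Finset.sum_congr rfl; intro k hk
        rw [intervalIntegral.integral_finset_sum]
        · have : ∀ l ∈ s, (∫ x in a..(a+2*L), (γ k * γ l) * (φ k x * φ l x))
              = if l = k then (γ k)^2 * nk k else 0 := by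
            intro l _
            rw [intervalIntegral.integral_const_mul, hI k l]
            rcases eq_or_ne l k with h | h
            · subst h; simp [hnk]; ring
            · simp [Ne.symm h, h]
          rw [Finset.sum_congr rfl this, Finset.sum_ite_eq' s k (fun _ => (γ k)^2 * nk k)]
          simp [hk]
        · intro l _
          exact (((hφcont k).mul (hφcont l)).intervalIntegrable _ _).const_mul _
      · intro k _
        exact (continuous_finset_sum _ (fun l _ =>
          continuous_const.mul ((hφcont k).mul (hφcont l)))).intervalIntegrable _ _
    rw [eA, eB]
    have harr : ∑ k ∈ s, (2*γ k) * d k = ∑ k ∈ s, 2 * ((d k)^2 / nk k) := by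
      apply Finset.sum_congr rfl; intro k _
      have h0 : nk k ≠ 0 := (hnkpos k).ne'
      simp only [hγ]
      field_simp
    have harr2 : ∑ k ∈ s, (γ k)^2 * nk k = ∑ k ∈ s, (d k)^2 / nk k := by
      apply Finset.sum_congr rfl; intro k _
      have h0 : nk k ≠ 0 := (hnkpos k).ne'
      simp only [hγ]
      field_simp
    rw [harr, harr2, ← Finset.mul_sum]
    ring
  have key : ∑ k ∈ s, (d k)^2 / nk k ≤ ∫ x in a..(a+2*L), (g x)^2 := by
    have h := hnonneg
    rw [hexp] at h
    linarith
  calc ∑ k ∈ s, (d k)^2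
      = ∑ k ∈ s, nk k * ((d k)^2 / nk k) := by
        apply Finset.sum_congr rfl; intro k _
        rw [mul_comm, div_mul_cancel₀ _ ((hnkpos k).ne')]
    _ ≤ ∑ k ∈ s, 2*L * ((d k)^2 / nk k) := by
        apply Finset.sum_le_sum; intro k _
        apply mul_le_mul_of_nonneg_right (hnkle k)
        positivity
    _ = 2*L * ∑ k ∈ s, (d k)^2 / nk k := by rw [Finset.mul_sum]
    _ ≤ 2*L * ∫ x in a..(a+2*L), (g x)^2 := by
        apply mul_le_mul_of_nonneg_left key
        linarith

lemma aux_block_index (L y : ℝ) (hL : 0 < L) (hy : L < y) :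
    ∃ j : ℕ, (2*((j:ℝ)+1)-1)*L < y ∧ y ≤ (2*((j:ℝ)+1)+1)*L := by
  set t := (y/L - 1)/2 with ht
  have hyL : 1 < y/L := (one_lt_div hL).2 hy
  have ht0 : 0 < t := by rw [ht]; linarith
  set n := ⌈t⌉₊ with hn
  have hn1 : 1 ≤ n := Nat.ceil_pos.2 ht0
  have hcast : ((n - 1 : ℕ) : ℝ) + 1 = (n : ℝ) := by
    rw [Nat.cast_sub hn1]; push_cast; ring
  refine ⟨n - 1, ?_, ?_⟩
  · have h2 : (n:ℝ) < t + 1 := Nat.ceil_lt_add_one ht0.le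
    have h3 : 2*(n:ℝ) - 1 < y/L := by rw [ht] at h2; linarith
    rw [hcast]
    calc (2*(n:ℝ)-1)*L < (y/L)*L := by exact mul_lt_mul_of_pos_right h3 hL
      _ = y := by field_simp
  · have h1 : t ≤ (n:ℝ) := Nat.le_ceil t
    have h3 : y/L ≤ 2*(n:ℝ) + 1 := by rw [ht] at h1; linarith
    rw [hcast]
    calc y = (y/L)*L := by field_simp
      _ ≤ (2*(n:ℝ)+1)*L := mul_le_mul_of_nonneg_right h3 hL.le
theorem bounded_density_cos_admissible
    (f : ℝ → ℝ) (M m ε : ℝ) (hM : 0 < M) (hε : 0 < ε)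
    (hfmeas : Measurable f) (hf0 : ∀ x, 0 ≤ f x) (hfM : ∀ x, f x ≤ M)
    (hf1 : Integrable f) (hprob : ∫ x : ℝ, f x = 1)
    (hmom : Integrable (fun x : ℝ => |x| ^ (1 + ε) * f x))
    (hm : ∫ x : ℝ, |x| ^ (1 + ε) * f x = m)
    (B : ℝ → ℝ)
    (hB : ∀ L : ℝ, B L = ∑' k : ℕ, (1 / L) *
        (∫ x in {x : ℝ | L < |x|},
          f x * Real.cos (k * Real.pi * (x + L) / (2 * L))) ^ 2) :
    (∀ L : ℝ, 0 < L →
        B L ≤ 4 * (∑' j : ℕ, ((j : ℝ) + 1) ^ (-(1 + ε))) * M * m * L ^ (-(1 + ε)))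
    ∧ Tendsto B atTop (nhds 0) := by
  set Z : ℝ := ∑' j : ℕ, ((j : ℝ) + 1) ^ (-(1 + ε)) with hZdef
  have hm0 : 0 ≤ m := by
    rw [← hm]
    exact integral_nonneg (fun x => mul_nonneg (Real.rpow_nonneg (abs_nonneg x) _) (hf0 x))
  have hmomnn : ∀ x : ℝ, 0 ≤ |x| ^ (1+ε) * f x :=
    fun x => mul_nonneg (Real.rpow_nonneg (abs_nonneg x) _) (hf0 x)
  have hZsummable : Summable (fun j : ℕ => ((j:ℝ)+1)^(-(1+ε))) := by
    have h1 : Summable (fun n : ℕ => ((n:ℝ))^(-(1+ε))) := Real.summable_nat_rpow.2 (by linarith)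
    have h2 := (summable_nat_add_iff 1).2 h1
    refine h2.congr (fun j => ?_)
    push_cast
    rfl
  have hZ0 : 0 ≤ Z := by
    rw [hZdef]
    exact tsum_nonneg (fun j => Real.rpow_nonneg (by positivity) _)
  have hfabs : ∀ x, |f x| ≤ M := fun x => by rw [abs_of_nonneg (hf0 x)]; exact hfM x
  have hmain : ∀ L : ℝ, 0 < L → B L ≤ 4 * Z * M * m * L ^ (-(1 + ε)) := by
    intro L hL
    rw [hB L]
    set T : Set ℝ := {x : ℝ | L < |x|} with hT
    have hTmeas : MeasurableSet T := measurableSet_lt measurable_const measurable_abs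
    set φ : ℕ → ℝ → ℝ := fun k x => Real.cos (k * Real.pi * (x + L) / (2 * L)) with hφ
    have hφmeas : ∀ k, Measurable (φ k) :=
      fun k => (Real.continuous_cos.comp (by continuity)).measurable
    have hφbd : ∀ k x, |φ k x| ≤ 1 := fun k x => Real.abs_cos_le_one _
    have hfφint : ∀ k, Integrable (fun x => f x * φ k x) := by
      intro k
      refine hf1.mono' ((hfmeas.mul (hφmeas k)).aestronglyMeasurable) (ae_of_all _ (fun x => ?_))
      rw [Real.norm_eq_abs, abs_mul]
      calc |f x| * |φ k x| ≤ |f x| * 1 := mul_le_mul_of_nonneg_left (hφbd k x) (abs_nonneg _)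
        _ = f x := by rw [mul_one, abs_of_nonneg (hf0 x)]
    have hf2int : Integrable (fun x => (f x)^2) := by
      refine (hf1.const_mul M).mono' ((hfmeas.pow_const 2).aestronglyMeasurable)
        (ae_of_all _ (fun x => ?_))
      rw [Real.norm_eq_abs, abs_of_nonneg (sq_nonneg _), sq]
      calc f x * f x ≤ M * f x := mul_le_mul_of_nonneg_right (hfM x) (hf0 x)
        _ ≤ M * f x := le_refl _
    set J : ℕ → ℝ := fun j => (j:ℝ)+1 with hJfun
    have hJ1 : ∀ j, (1:ℝ) ≤ J j := by
      intro j; simp only [hJfun]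
      have : (0:ℝ) ≤ (j:ℝ) := Nat.cast_nonneg j
      linarith
    have hJ0 : ∀ j, (0:ℝ) < J j := fun j => lt_of_lt_of_le one_pos (hJ1 j)
    set A : Bool × ℕ → Set ℝ := fun i =>
      if i.1 then Set.Ioc ((2*J i.2-1)*L) ((2*J i.2+1)*L)
      else Set.Ico (-((2*J i.2+1)*L)) (-((2*J i.2-1)*L)) with hA
    have hAfalse : ∀ j, A (false, j) = Set.Ico (-((2*J j+1)*L)) (-((2*J j-1)*L)) := by
      intro j; simp [hA]
    have hAtrue : ∀ j, A (true, j) = Set.Ioc ((2*J j-1)*L) ((2*J j+1)*L) := by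
      intro j; simp [hA]
    have hAmeas : ∀ i, MeasurableSet (A i) := by
      rintro ⟨b, j⟩
      cases b
      · rw [hAfalse]; exact measurableSet_Ico
      · rw [hAtrue]; exact measurableSet_Ioc
    have h1L : ∀ j, (1:ℝ)*L ≤ (2*J j-1)*L :=
      fun j => mul_le_mul_of_nonneg_right (by linarith [hJ1 j]) hL.le
    have hAsub : ∀ i, A i ⊆ T := by
      rintro ⟨b, j⟩ x hx
      cases b
      · rw [hAfalse] at hx
        rcases hx with ⟨hx1, hx2⟩
        simp only [hT, Set.mem_setOf_eq]
        have h2 : L < -x := by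
          have := h1L j
          simp only [one_mul] at this
          linarith
        exact lt_of_lt_of_le h2 (neg_le_abs x)
      · rw [hAtrue] at hx
        rcases hx with ⟨hx1, hx2⟩
        simp only [hT, Set.mem_setOf_eq]
        have h2 : L < x := by
          have := h1L j
          simp only [one_mul] at this
          linarith
        exact lt_of_lt_of_le h2 (le_abs_self x)
    have hAunion : (⋃ i, A i) = T := by
      apply Set.Subset.antisymm
      · exact Set.iUnion_subset hAsub
      · intro x hx
        simp only [hT, Set.mem_setOf_eq] at hx
        rcases lt_abs.1 hx with h | h
        · obtain ⟨j, hj1, hj2⟩ := aux_block_index L x hL h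
          refine Set.mem_iUnion.2 ⟨(true, j), ?_⟩
          rw [hAtrue]
          exact ⟨by simpa [hJfun] using hj1, by simpa [hJfun] using hj2⟩
        · obtain ⟨j, hj1, hj2⟩ := aux_block_index L (-x) hL h
          refine Set.mem_iUnion.2 ⟨(false, j), ?_⟩
          rw [hAfalse]
          constructor
          · have : -x ≤ (2*J j+1)*L := by simpa [hJfun] using hj2
            linarith
          · have : (2*J j-1)*L < -x := by simpa [hJfun] using hj1
            linarith
    have hAdisj : Pairwise (Function.onFun Disjoint A) := by
      rintro ⟨b1, j1⟩ ⟨b2, j2⟩ hne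
      rw [Function.onFun, Set.disjoint_left]
      intro x hx1 hx2
      have hcast : ∀ {u v : ℕ}, u < v → J u + 1 ≤ J v := by
        intro u v huv
        simp only [hJfun]
        have : (u:ℝ) + 1 ≤ (v:ℝ) := by exact_mod_cast Nat.succ_le_of_lt huv
        linarith
      cases b1 <;> cases b2
      · -- false, false
        have hjj : j1 ≠ j2 := by
          intro hj; exact hne (by rw [hj])
        rw [hAfalse] at hx1 hx2
        rcases hx1 with ⟨ha1, ha2⟩
        rcases hx2 with ⟨hb1, hb2⟩
        rcases lt_or_gt_of_ne hjj with h | h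
        · have hc := hcast h
          have := mul_le_mul_of_nonneg_right (show 2*J j2-1 ≥ 2*J j1+1 by linarith) hL.le
          linarith
        · have hc := hcast h
          have := mul_le_mul_of_nonneg_right (show 2*J j1-1 ≥ 2*J j2+1 by linarith) hL.le
          linarith
      · -- false, true
        rw [hAfalse] at hx1; rw [hAtrue] at hx2
        rcases hx1 with ⟨ha1, ha2⟩
        rcases hx2 with ⟨hb1, hb2⟩
        have h1 := h1L j1
        have h2 := h1L j2
        simp only [one_mul] at h1 h2
        linarith
      · -- true, false
        rw [hAtrue] at hx1; rw [hAfalse] at hx2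
        rcases hx1 with ⟨ha1, ha2⟩
        rcases hx2 with ⟨hb1, hb2⟩
        have h1 := h1L j1
        have h2 := h1L j2
        simp only [one_mul] at h1 h2
        linarith
      · -- true, true
        have hjj : j1 ≠ j2 := by
          intro hj; exact hne (by rw [hj])
        rw [hAtrue] at hx1 hx2
        rcases hx1 with ⟨ha1, ha2⟩
        rcases hx2 with ⟨hb1, hb2⟩
        rcases lt_or_gt_of_ne hjj with h | h
        · have hc := hcast h
          have := mul_le_mul_of_nonneg_right (show 2*J j2-1 ≥ 2*J j1+1 by linarith) hL.le
          linarith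
        · have hc := hcast h
          have := mul_le_mul_of_nonneg_right (show 2*J j1-1 ≥ 2*J j2+1 by linarith) hL.le
          linarith
    -- block integrals
    set c : ℕ → ℝ := fun k => ∫ x in T, f x * φ k x with hcdef
    set bi : (Bool × ℕ) → ℕ → ℝ := fun i k => ∫ x in A i, f x * φ k x with hbidef
    set ν : (Bool × ℕ) → ℝ := fun i => ∫ x in A i, f x with hνdef
    set μ : (Bool × ℕ) → ℝ := fun i => ∫ x in A i, |x|^(1+ε) * f x with hμdef
    have hctsum : ∀ k, c k = ∑' i, bi i k := by
      intro k
      calc c k = ∫ x in ⋃ i, A i, f x * φ k x := by rw [hAunion]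
        _ = ∑' i, bi i k := integral_iUnion hAmeas hAdisj ((hfφint k).integrableOn)
    have hν0 : ∀ i, 0 ≤ ν i := fun i => setIntegral_nonneg (hAmeas i) (fun x _ => hf0 x)
    have hμ0 : ∀ i, 0 ≤ μ i := fun i => setIntegral_nonneg (hAmeas i) (fun x _ => hmomnn x)
    have hbiabs : ∀ i k, |bi i k| ≤ ν i := by
      intro i k
      calc |bi i k| ≤ ∫ x in A i, |f x * φ k x| := by
            simpa only [Real.norm_eq_abs] using
              norm_integral_le_integral_norm (μ := volume.restrict (A i))
                (f := fun x => f x * φ k x)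
        _ ≤ ∫ x in A i, f x := by
            apply setIntegral_mono_on ((hfφint k).abs.integrableOn) hf1.integrableOn (hAmeas i)
            intro x _
            rw [abs_mul]
            calc |f x| * |φ k x| ≤ |f x| * 1 := mul_le_mul_of_nonneg_left (hφbd k x) (abs_nonneg _)
              _ = f x := by rw [mul_one, abs_of_nonneg (hf0 x)]
    have hblockmem : ∀ (i : Bool × ℕ), ∀ x ∈ A i, J i.2 * L ≤ |x| := by
      rintro ⟨b, j⟩ x hx
      have h2 : J j * L ≤ (2*J j - 1)*L :=
        mul_le_mul_of_nonneg_right (by linarith [hJ1 j]) hL.le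
      cases b
      · rw [hAfalse] at hx; rcases hx with ⟨hx1, hx2⟩
        calc J j * L ≤ (2*J j-1)*L := h2
          _ ≤ -x := by linarith
          _ ≤ |x| := neg_le_abs x
      · rw [hAtrue] at hx; rcases hx with ⟨hx1, hx2⟩
        calc J j * L ≤ (2*J j-1)*L := h2
          _ ≤ x := hx1.le
          _ ≤ |x| := le_abs_self x
    have hνμ : ∀ i, ν i ≤ (J i.2 * L)^(-(1+ε)) * μ i := by
      intro i
      have hJL : 0 < J i.2 * L := mul_pos (hJ0 _) hL
      have hpow : (0:ℝ) < (J i.2 * L)^(1+ε) := Real.rpow_pos_of_pos hJL _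
      have h1 : (J i.2 * L)^(1+ε) * ν i ≤ μ i := by
        have e : (J i.2*L)^(1+ε) * ν i = ∫ x in A i, (J i.2*L)^(1+ε) * f x := by
          rw [hνdef]
          exact (integral_const_mul _ _).symm
        rw [e]
        apply setIntegral_mono_on ((hf1.const_mul _).integrableOn) hmom.integrableOn (hAmeas i)
        intro x hx
        apply mul_le_mul_of_nonneg_right _ (hf0 x)
        exact Real.rpow_le_rpow hJL.le (hblockmem i x hx) (by linarith)
      rw [Real.rpow_neg hJL.le, inv_mul_eq_div, le_div_iff₀ hpow]
      linarith [h1]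
    have hμlem : ∀ i, μ i ≤ m := by
      intro i
      rw [← hm]
      exact setIntegral_le_integral hmom (ae_of_all _ (fun x => hmomnn x))
    have hμfinsum : ∀ t : Finset (Bool × ℕ), ∑ i ∈ t, μ i ≤ m := by
      intro t
      have e : ∑ i ∈ t, μ i = ∫ x in ⋃ i ∈ t, A i, |x|^(1+ε) * f x :=
        (integral_biUnion_finset t (fun i _ => hAmeas i) (hAdisj.set_pairwise _)
          (fun i _ => hmom.integrableOn)).symm
      rw [e, ← hm]
      exact setIntegral_le_integral hmom (ae_of_all _ (fun x => hmomnn x))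
    have hμsummable : Summable μ := summable_of_sum_le (fun i => hμ0 i) hμfinsum
    have hμtsum : ∑' i, μ i ≤ m := tsum_le_of_sum_le' hm0 hμfinsum
    -- Bessel on blocks
    have hbessel : ∀ (i : Bool × ℕ) (s : Finset ℕ),
        ∑ k ∈ s, (bi i k)^2 ≤ 2*L*(M * ν i) := by
      rintro ⟨b, j⟩ s
      have hstep2 : ∫ x in A (b,j), (f x)^2 ≤ M * ν (b,j) := by
        have e : M * ν (b,j) = ∫ x in A (b,j), M * f x := by
          rw [hνdef]; exact (integral_const_mul _ _).symm
        rw [e]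
        apply setIntegral_mono_on hf2int.integrableOn ((hf1.const_mul M).integrableOn) (hAmeas _)
        intro x _
        rw [sq]
        exact mul_le_mul_of_nonneg_right (hfM x) (hf0 x)
      have hstep : ∑ k ∈ s, (bi (b,j) k)^2 ≤ 2*L* ∫ x in A (b,j), (f x)^2 := by
        cases b
        · set a := -((2*J j+1)*L) with ha
          have hA' : A (false, j) = Set.Ico a (a + 2*L) := by
            rw [hAfalse]
            congr 1
            rw [ha]; ring
          have hconv : ∀ h : ℝ → ℝ, (∫ x in A (false,j), h x) = ∫ x in a..(a+2*L), h x := by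
            intro h
            rw [hA', MeasureTheory.integral_Ico_eq_integral_Ioo,
               ← MeasureTheory.integral_Ioc_eq_integral_Ioo,
               ← intervalIntegral.integral_of_le (by linarith)]
          have han : a + L = 2*((-(j:ℤ)-1 : ℤ):ℝ)*L := by
            rw [ha]; simp only [hJfun]; push_cast; ring
          have hb := aux_bessel_finite L hL a _ han f hfmeas M hfabs s
          calc ∑ k ∈ s, (bi (false,j) k)^2
              = ∑ k ∈ s, (∫ x in a..(a+2*L), f x * φ k x)^2 := by
                apply Finset.sum_congr rfl; intro k _
                rw [hbidef]; dsimp only; rw [hconv]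
            _ ≤ 2*L*∫ x in a..(a+2*L), (f x)^2 := by simpa [hφ] using hb
            _ = 2*L*∫ x in A (false,j), (f x)^2 := by rw [hconv]
        · set a := (2*J j-1)*L with ha
          have hA' : A (true, j) = Set.Ioc a (a + 2*L) := by
            rw [hAtrue]
            congr 1
            rw [ha]; ring
          have hconv : ∀ h : ℝ → ℝ, (∫ x in A (true,j), h x) = ∫ x in a..(a+2*L), h x := by
            intro h
            rw [hA', ← intervalIntegral.integral_of_le (by linarith)]
          have han : a + L = 2*(((j:ℤ)+1 : ℤ):ℝ)*L := by
            rw [ha]; simp only [hJfun]; push_cast; ring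
          have hb := aux_bessel_finite L hL a _ han f hfmeas M hfabs s
          calc ∑ k ∈ s, (bi (true,j) k)^2
              = ∑ k ∈ s, (∫ x in a..(a+2*L), f x * φ k x)^2 := by
                apply Finset.sum_congr rfl; intro k _
                rw [hbidef]; dsimp only; rw [hconv]
            _ ≤ 2*L*∫ x in a..(a+2*L), (f x)^2 := by simpa [hφ] using hb
            _ = 2*L*∫ x in A (true,j), (f x)^2 := by rw [hconv]
      calc ∑ k ∈ s, (bi (b,j) k)^2 ≤ 2*L* ∫ x in A (b,j), (f x)^2 := hstep
        _ ≤ 2*L*(M * ν (b,j)) := by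
            apply mul_le_mul_of_nonneg_left hstep2
            linarith
    have hkey : ∀ (i : Bool × ℕ) (s : Finset ℕ),
        (J i.2)^(1+ε) * ∑ k ∈ s, (bi i k)^2 ≤ 2*L*M*L^(-(1+ε)) * μ i := by
      intro i s
      have h1 : ∑ k ∈ s, (bi i k)^2 ≤ 2*L*(M*ν i) := hbessel i s
      have h2 := hνμ i
      have hsplit : (J i.2 * L)^(-(1+ε)) = (J i.2)^(-(1+ε)) * L^(-(1+ε)) :=
        Real.mul_rpow (hJ0 _).le hL.le
      have hJpow : (0:ℝ) < (J i.2)^(1+ε) := Real.rpow_pos_of_pos (hJ0 _) _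
      calc (J i.2)^(1+ε) * ∑ k ∈ s, (bi i k)^2
          ≤ (J i.2)^(1+ε) * (2*L*(M*ν i)) := mul_le_mul_of_nonneg_left h1 hJpow.le
        _ ≤ (J i.2)^(1+ε) * (2*L*(M*((J i.2 * L)^(-(1+ε)) * μ i))) := by
            apply mul_le_mul_of_nonneg_left _ hJpow.le
            apply mul_le_mul_of_nonneg_left _ (by linarith)
            exact mul_le_mul_of_nonneg_left h2 hM.le
        _ = 2*L*M*L^(-(1+ε)) * μ i * ((J i.2)^(1+ε) * (J i.2)^(-(1+ε))) := by
            rw [hsplit]; ring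
        _ = 2*L*M*L^(-(1+ε)) * μ i := by
            rw [← Real.rpow_add (hJ0 _)]
            have h7 : (1+ε) + -(1+ε) = 0 := by ring
            rw [h7, Real.rpow_zero, mul_one]
    have hbound1 : ∀ (i : Bool × ℕ) (k : ℕ),
        (J i.2)^(1+ε) * (bi i k)^2 ≤ 2*L*M*L^(-(1+ε)) * μ i := by
      intro i k
      have := hkey i {k}
      simpa using this
    have hVsummable : ∀ k, Summable (fun i => (J i.2)^(1+ε) * (bi i k)^2) := by
      intro k
      exact Summable.of_nonneg_of_le
        (fun i => mul_nonneg (Real.rpow_nonneg (hJ0 _).le _) (sq_nonneg _))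
        (fun i => hbound1 i k) (hμsummable.mul_left _)
    set w : Bool × ℕ → ℝ := fun i => (J i.2)^(-(1+ε)) with hwdef
    have hw0 : ∀ i, 0 ≤ w i := fun i => Real.rpow_nonneg (hJ0 _).le _
    have hwcol : ∀ b : Bool, Summable (fun j : ℕ => w (b, j)) := by
      intro b
      refine hZsummable.congr (fun j => ?_)
      simp [hwdef, hJfun]
    have hwsummable : Summable w := by
      apply (summable_prod_of_nonneg hw0).2
      constructor
      · exact hwcol
      · exact Summable.of_finite
    have hWsum : ∑' i, w i = 2*Z := by
      have e : ∀ b : Bool, ∑' j : ℕ, w (b, j) = Z := by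
        intro b
        rw [hZdef]
      calc ∑' i, w i = ∑' (b : Bool), ∑' (j : ℕ), w (b, j) := Summable.tsum_prod' hwsummable hwcol
        _ = (∑' j : ℕ, w (false, j)) + (∑' j : ℕ, w (true, j)) := tsum_bool _
        _ = Z + Z := by simp only [e]
        _ = 2*Z := by ring
    have hνbound : ∀ i, ν i ≤ L^(-(1+ε)) * μ i := by
      intro i
      refine (hνμ i).trans ?_
      rw [Real.mul_rpow (hJ0 _).le hL.le]
      have h1 : (J i.2)^(-(1+ε)) ≤ 1 :=
        Real.rpow_le_one_of_one_le_of_nonpos (hJ1 _) (by linarith)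
      calc (J i.2)^(-(1+ε)) * L^(-(1+ε)) * μ i
          ≤ 1 * L^(-(1+ε)) * μ i := by
            apply mul_le_mul_of_nonneg_right _ (hμ0 i)
            exact mul_le_mul_of_nonneg_right h1 (Real.rpow_nonneg hL.le _)
        _ = L^(-(1+ε)) * μ i := by ring
    have habsb_summable : ∀ k, Summable (fun i => |bi i k|) := by
      intro k
      exact Summable.of_nonneg_of_le (fun i => abs_nonneg _)
        (fun i => (hbiabs i k).trans (hνbound i)) (hμsummable.mul_left _)
    have hCS : ∀ k, (c k)^2 ≤ (2*Z) * ∑' i, (J i.2)^(1+ε) * (bi i k)^2 := by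
      intro k
      set V := ∑' i, (J i.2)^(1+ε) * (bi i k)^2 with hVdef
      have hV0 : 0 ≤ V :=
        tsum_nonneg (fun i => mul_nonneg (Real.rpow_nonneg (hJ0 _).le _) (sq_nonneg _))
      have h2ZV : 0 ≤ 2*Z*V := mul_nonneg (by linarith) hV0
      have habs : |c k| ≤ Real.sqrt ((2*Z)*V) := by
        rw [hctsum k]
        have hn : Summable (fun i => ‖bi i k‖) := by
          simpa only [Real.norm_eq_abs] using habsb_summable k
        have h1 : |∑' i, bi i k| ≤ ∑' i, |bi i k| := by
          have h := norm_tsum_le_tsum_norm hn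
          simpa only [Real.norm_eq_abs] using h
        refine h1.trans ?_
        apply tsum_le_of_sum_le' (Real.sqrt_nonneg _)
        intro t
        have e1 : ∀ i, |bi i k| = Real.sqrt (w i) * Real.sqrt ((J i.2)^(1+ε) * (bi i k)^2) := by
          intro i
          rw [← Real.sqrt_mul (hw0 i)]
          have e : w i * ((J i.2)^(1+ε) * (bi i k)^2) = (bi i k)^2 := by
            simp only [hwdef]
            rw [← mul_assoc, ← Real.rpow_add (hJ0 _)]
            have h7 : -(1+ε) + (1+ε) = 0 := by ring
            rw [h7, Real.rpow_zero, one_mul]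
          rw [e, Real.sqrt_sq_eq_abs]
        have hCS2 : (∑ i ∈ t, |bi i k|)^2
            ≤ (∑ i ∈ t, w i) * (∑ i ∈ t, (J i.2)^(1+ε)*(bi i k)^2) := by
          calc (∑ i ∈ t, |bi i k|)^2
              = (∑ i ∈ t, Real.sqrt (w i) * Real.sqrt ((J i.2)^(1+ε)*(bi i k)^2))^2 := by
                rw [Finset.sum_congr rfl (fun i _ => e1 i)]
            _ ≤ (∑ i ∈ t, Real.sqrt (w i)^2) * (∑ i ∈ t, Real.sqrt ((J i.2)^(1+ε)*(bi i k)^2)^2) :=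
                Finset.sum_mul_sq_le_sq_mul_sq _ _ _
            _ = (∑ i ∈ t, w i) * (∑ i ∈ t, (J i.2)^(1+ε)*(bi i k)^2) := by
                congr 1
                · apply Finset.sum_congr rfl; intro i _
                  exact Real.sq_sqrt (hw0 i)
                · apply Finset.sum_congr rfl; intro i _
                  exact Real.sq_sqrt (mul_nonneg (Real.rpow_nonneg (hJ0 _).le _) (sq_nonneg _))
        have h3 : (∑ i ∈ t, w i) ≤ 2*Z := by
          rw [← hWsum]
          exact Summable.sum_le_tsum t (fun i _ => hw0 i) hwsummable
        have h4 : (∑ i ∈ t, (J i.2)^(1+ε)*(bi i k)^2) ≤ V :=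
          Summable.sum_le_tsum t (fun i _ => mul_nonneg (Real.rpow_nonneg (hJ0 _).le _) (sq_nonneg _))
            (hVsummable k)
        have h5 : (∑ i ∈ t, |bi i k|)^2 ≤ (2*Z)*V := by
          refine hCS2.trans (mul_le_mul h3 h4 ?_ (by linarith))
          exact Finset.sum_nonneg (fun i _ =>
            mul_nonneg (Real.rpow_nonneg (hJ0 _).le _) (sq_nonneg _))
        have h6 : 0 ≤ ∑ i ∈ t, |bi i k| := Finset.sum_nonneg (fun i _ => abs_nonneg _)
        calc ∑ i ∈ t, |bi i k| = Real.sqrt ((∑ i ∈ t, |bi i k|)^2) := (Real.sqrt_sq h6).symm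
          _ ≤ Real.sqrt ((2*Z)*V) := Real.sqrt_le_sqrt h5
      calc (c k)^2 = |c k|^2 := (sq_abs _).symm
        _ ≤ (Real.sqrt ((2*Z)*V))^2 := pow_le_pow_left₀ (abs_nonneg _) habs 2
        _ = (2*Z)*V := Real.sq_sqrt h2ZV
    -- final assembly
    have hgoal : ∀ k : ℕ, (∫ x in T, f x * Real.cos (k * Real.pi * (x + L) / (2 * L))) = c k :=
      fun k => rfl
    have hRHS0 : 0 ≤ 4*Z*M*m*L^(-(1+ε)) := by
      have := Real.rpow_nonneg hL.le (-(1+ε))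
      positivity
    simp only [hgoal]
    apply tsum_le_of_sum_le' hRHS0
    intro s
    have hswap : ∑ k ∈ s, ∑' i, (J i.2)^(1+ε) * (bi i k)^2
        = ∑' i, ∑ k ∈ s, (J i.2)^(1+ε)*(bi i k)^2 :=
      (Summable.tsum_finsetSum (fun k _ => hVsummable k)).symm
    have hterm : ∀ i, ∑ k ∈ s, (J i.2)^(1+ε)*(bi i k)^2 ≤ 2*L*M*L^(-(1+ε)) * μ i := by
      intro i
      rw [← Finset.mul_sum]
      exact hkey i s
    have hsum2 : ∑' i, ∑ k ∈ s, (J i.2)^(1+ε)*(bi i k)^2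
        ≤ ∑' i, 2*L*M*L^(-(1+ε)) * μ i := by
      refine Summable.tsum_le_tsum hterm ?_ (hμsummable.mul_left _)
      exact Summable.of_nonneg_of_le
        (fun i => Finset.sum_nonneg (fun k _ =>
          mul_nonneg (Real.rpow_nonneg (hJ0 _).le _) (sq_nonneg _)))
        hterm (hμsummable.mul_left _)
    have hsum3 : ∑' i, 2*L*M*L^(-(1+ε)) * μ i = 2*L*M*L^(-(1+ε)) * ∑' i, μ i := tsum_mul_left
    calc ∑ k ∈ s, (1/L)*(c k)^2
        = (1/L) * ∑ k ∈ s, (c k)^2 := by rw [Finset.mul_sum]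
      _ ≤ (1/L) * ((2*Z) * ∑' i, ∑ k ∈ s, (J i.2)^(1+ε)*(bi i k)^2) := by
          apply mul_le_mul_of_nonneg_left _ (by positivity)
          calc ∑ k ∈ s, (c k)^2
              ≤ ∑ k ∈ s, (2*Z) * (∑' i, (J i.2)^(1+ε)*(bi i k)^2) :=
                Finset.sum_le_sum (fun k _ => hCS k)
            _ = (2*Z) * ∑ k ∈ s, ∑' i, (J i.2)^(1+ε)*(bi i k)^2 := by rw [Finset.mul_sum]
            _ = (2*Z) * ∑' i, ∑ k ∈ s, (J i.2)^(1+ε)*(bi i k)^2 := by rw [hswap]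
      _ ≤ (1/L) * ((2*Z) * (2*L*M*L^(-(1+ε)) * m)) := by
          apply mul_le_mul_of_nonneg_left _ (by positivity)
          apply mul_le_mul_of_nonneg_left _ (by linarith)
          calc ∑' i, ∑ k ∈ s, (J i.2)^(1+ε)*(bi i k)^2
              ≤ ∑' i, 2*L*M*L^(-(1+ε)) * μ i := hsum2
            _ = 2*L*M*L^(-(1+ε)) * ∑' i, μ i := hsum3
            _ ≤ 2*L*M*L^(-(1+ε)) * m := by
                apply mul_le_mul_of_nonneg_left hμtsum
                have := Real.rpow_nonneg hL.le (-(1+ε))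
                positivity
      _ = 4*Z*M*m*L^(-(1+ε)) := by
          field_simp
          ring
  refine ⟨hmain, ?_⟩
  have hC : Tendsto (fun L : ℝ => 4*Z*M*m*L^(-(1+ε))) atTop (nhds 0) := by
    have h := (tendsto_rpow_neg_atTop (show (0:ℝ) < 1+ε by linarith)).const_mul (4*Z*M*m)
    simpa [mul_comm] using h
  apply tendsto_of_tendsto_of_tendsto_of_le_of_le' tendsto_const_nhds hC
  · filter_upwards [eventually_gt_atTop (0:ℝ)] with L hL
    rw [hB L]
    exact tsum_nonneg (fun k => mul_nonneg (by positivity) (sq_nonneg _))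
  · filter_upwards [eventually_gt_atTop (0:ℝ)] with L hL
    exact hmain L hL
end
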